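/- arXiv:2106.10100 — 16 statements merged into one kernel-verified Lean document; each statement's English description precedes it below -/
import Mathlib

section
/- Let t_1, …, t_n be L-terms over a variable type β and let Γ be the set of equations {y_i ≈ t_i : i ∈ Fin n} over the disjoint union β ⊕ Fin n, where y_i denotes the i-th variable from Fin n and each t_i is viewed as a term over β ⊕ Fin n. Then: (a) for every equation ε over Fin n, ⊨_V ε(t_1, …, t_n) if and only if Γ ⊨_V ε (as equations over β ⊕ Fin n); and (b) t_1, …, t_n are V-independent if and only if for every equation ε over Fin n, Γ ⊨_V ε implies ⊨_V ε. -/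
open FirstOrder FirstOrder.Language

/-- An `L`-equation over the variable type `α`: a pair of `L`-terms. -/
abbrev LEqn (L : FirstOrder.Language) (α : Type) : Type _ := L.Term α × L.Term α

/-- `M` belongs to the equational class `V` determined by the set `E` of equations
(over arbitrary variable types): `M` is nonempty and every equation of `E` holds in `M`
under every valuation. -/
def InVariety (L : FirstOrder.Language) (E : Set (Σ α : Type, LEqn L α))
    (M : Type) [L.Structure M] : Prop :=
  Nonempty M ∧ ∀ q ∈ E, ∀ v : q.1 → M, q.2.1.realize v = q.2.2.realize v

/-- Equational consequence `S ⊨_V e` over the equational class determined by `E`. -/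
def VModels (L : FirstOrder.Language) (E : Set (Σ α : Type, LEqn L α))
    {α : Type} (S : Set (LEqn L α)) (e : LEqn L α) : Prop :=
  ∀ (M : Type) [L.Structure M], InVariety L E M →
    ∀ v : α → M, (∀ q ∈ S, q.1.realize v = q.2.realize v) →
      e.1.realize v = e.2.realize v

/-- `⊨_V e`, i.e., `∅ ⊨_V e`. -/
def VValid (L : FirstOrder.Language) (E : Set (Σ α : Type, LEqn L α))
    {α : Type} (e : LEqn L α) : Prop :=
  VModels L E (∅ : Set (LEqn L α)) e

/-- `t 0, …, t (n-1)` are `V`-dependent: some equation `e` over `Fin n` satisfies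
`⊨_V e(t 0, …, t (n-1))` but not `⊨_V e`. -/
def VDependent (L : FirstOrder.Language) (E : Set (Σ α : Type, LEqn L α))
    {β : Type} {n : ℕ} (t : Fin n → L.Term β) : Prop :=
  ∃ e : LEqn L (Fin n), VValid L E (e.1.subst t, e.2.subst t) ∧ ¬ VValid L E e

/-- The set `Γ = {y_i ≈ t_i : i ∈ Fin n}` of equations over `β ⊕ Fin n`. -/
def GammaSet (L : FirstOrder.Language) {β : Type} {n : ℕ} (t : Fin n → L.Term β) :
    Set (LEqn L (β ⊕ Fin n)) :=
  { q | ∃ i : Fin n, q = (Term.var (Sum.inr i), (t i).relabel Sum.inl) }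

theorem stmt0 (L : FirstOrder.Language) (hL : ∀ k, IsEmpty (L.Relations k))
    (E : Set (Σ α : Type, LEqn L α)) {β : Type} {n : ℕ} (t : Fin n → L.Term β) :
    (∀ e : LEqn L (Fin n),
        VValid L E (e.1.subst t, e.2.subst t) ↔
          VModels L E (GammaSet L t) (e.1.relabel Sum.inr, e.2.relabel Sum.inr)) ∧
    (¬ VDependent L E t ↔
      ∀ e : LEqn L (Fin n),
        VModels L E (GammaSet L t) (e.1.relabel Sum.inr, e.2.relabel Sum.inr) →
          VValid L E e) := by
  have key : ∀ e : LEqn L (Fin n),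
      VValid L E (e.1.subst t, e.2.subst t) ↔
        VModels L E (GammaSet L t) (e.1.relabel Sum.inr, e.2.relabel Sum.inr) := by
    intro e
    constructor
    · intro h M _ hM v hv
      have hvar : ∀ i : Fin n, v (Sum.inr i) = (t i).realize (v ∘ Sum.inl) := by
        intro i
        have := hv _ ⟨i, rfl⟩
        simpa [Term.realize_relabel] using this
      have := h M hM (v ∘ Sum.inl) (by simp)
      simp only [Term.realize_subst] at this
      simp only [Term.realize_relabel]
      convert this using 2 <;> funext i <;> exact hvar i
    · intro h M _ hM w _
      have := h M hM (Sum.elim w (fun i => (t i).realize w)) ?_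
      · simpa [Term.realize_relabel, Term.realize_subst, Function.comp] using this
      · rintro q ⟨i, rfl⟩
        simp [Term.realize_relabel, Function.comp]
  refine ⟨key, ?_⟩
  unfold VDependent
  push_neg
  constructor
  · intro h e he
    exact h e ((key e).mpr he)
  · intro h e he
    exact h e ((key e).mp he)
end

section
/- Let Σ be a set of equations over a variable type β, let t_1, …, t_n be L-terms over β, and let Γ be the set of equations Σ ∪ {y_i ≈ t_i : i ∈ Fin n} over the disjoint union β ⊕ Fin n. Then: (a) for every equation ε over Fin n, Σ ⊨_V ε(t_1, …, t_n) if and only if Γ ⊨_V ε (as equations over β ⊕ Fin n); and (b) t_1, …, t_n are V-independent over Σ if and only if for every equation ε over Fin n, Γ ⊨_V ε implies ⊨_V ε. -/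
open FirstOrder FirstOrder.Language

/-- `t 0, …, t (n-1)` are `V`-dependent over `S`: some equation `e` over `Fin n` satisfies
`S ⊨_V e(t 0, …, t (n-1))` but not `⊨_V e`. -/
def VDependentOver (L : FirstOrder.Language) (E : Set (Σ α : Type, LEqn L α))
    {β : Type} {n : ℕ} (S : Set (LEqn L β)) (t : Fin n → L.Term β) : Prop :=
  ∃ e : LEqn L (Fin n), VModels L E S (e.1.subst t, e.2.subst t) ∧ ¬ VValid L E e

/-- The set `Γ = Σ ∪ {y_i ≈ t_i : i ∈ Fin n}` of equations over `β ⊕ Fin n`. -/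
def GammaSetS (L : FirstOrder.Language) {β : Type} {n : ℕ}
    (S : Set (LEqn L β)) (t : Fin n → L.Term β) : Set (LEqn L (β ⊕ Fin n)) :=
  (fun q : LEqn L β => ((q.1.relabel Sum.inl, q.2.relabel Sum.inl) : LEqn L (β ⊕ Fin n))) '' S ∪
    { q | ∃ i : Fin n, q = (Term.var (Sum.inr i), (t i).relabel Sum.inl) }

theorem stmt1 (L : FirstOrder.Language) (hL : ∀ k, IsEmpty (L.Relations k))
    (E : Set (Σ α : Type, LEqn L α)) {β : Type} {n : ℕ}
    (S : Set (LEqn L β)) (t : Fin n → L.Term β) :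
    (∀ e : LEqn L (Fin n),
        VModels L E S (e.1.subst t, e.2.subst t) ↔
          VModels L E (GammaSetS L S t) (e.1.relabel Sum.inr, e.2.relabel Sum.inr)) ∧
    (¬ VDependentOver L E S t ↔
      ∀ e : LEqn L (Fin n),
        VModels L E (GammaSetS L S t) (e.1.relabel Sum.inr, e.2.relabel Sum.inr) →
          VValid L E e) := by
  have main : ∀ e : LEqn L (Fin n),
      VModels L E S (e.1.subst t, e.2.subst t) ↔
        VModels L E (GammaSetS L S t) (e.1.relabel Sum.inr, e.2.relabel Sum.inr) := by
    intro e
    constructor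
    · intro h M _ hM v hv
      have hS : ∀ q ∈ S, q.1.realize (v ∘ Sum.inl) = q.2.realize (v ∘ Sum.inl) := by
        intro q hq
        have := hv _ (Or.inl ⟨q, hq, rfl⟩)
        simpa [Term.realize_relabel] using this
      have ht : ∀ i : Fin n, v (Sum.inr i) = (t i).realize (v ∘ Sum.inl) := by
        intro i
        have := hv _ (Or.inr ⟨i, rfl⟩)
        simpa [Term.realize_relabel] using this
      have key := h M hM (v ∘ Sum.inl) hS
      simp only [Term.realize_subst] at key
      simp only [Term.realize_relabel]
      calc e.1.realize (v ∘ Sum.inr)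
          = e.1.realize (fun i => (t i).realize (v ∘ Sum.inl)) := by
            congr 1; funext i; exact ht i
        _ = e.2.realize (fun i => (t i).realize (v ∘ Sum.inl)) := key
        _ = e.2.realize (v ∘ Sum.inr) := by
            congr 1; funext i; exact (ht i).symm
    · intro h M _ hM w hw
      set v : β ⊕ Fin n → M := Sum.elim w (fun i => (t i).realize w) with hvdef
      have hΓ : ∀ q ∈ GammaSetS L S t, q.1.realize v = q.2.realize v := by
        rintro q (⟨p, hp, rfl⟩ | ⟨i, rfl⟩)
        · have := hw p hp
          simpa [Term.realize_relabel, hvdef] using this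
        · simp [Term.realize_relabel, hvdef]
      have key := h M hM v hΓ
      simp only [Term.realize_relabel] at key
      have hvi : (v ∘ Sum.inr) = fun i => (t i).realize w := rfl
      have hvl : (v ∘ Sum.inl) = w := rfl
      rw [hvi] at key
      simpa [Term.realize_subst] using key
  refine ⟨main, ?_⟩
  unfold VDependentOver
  push_neg
  constructor
  · intro h e hΓ
    exact h e ((main e).mpr hΓ)
  · intro h e hS
    exact h e ((main e).mp hS)
end

section
/- Let Δ be a V-refuting set of equations over Fin n. Then L-terms t_1, …, t_n over a variable type β are V-dependent if and only if ⊨_V δ(t_1, …, t_n) for some δ ∈ Δ. -/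
open FirstOrder FirstOrder.Language

/-- `Γ ⊢~_V Δ`: for every substitution `σ` (into terms over a countably infinite
variable type), if `⊨_V σ(e)` for all `e ∈ Γ` then `⊨_V σ(d)` for some `d ∈ Δ`. -/
def VAdm (L : FirstOrder.Language) (E : Set (Σ α : Type, LEqn L α))
    {α : Type} (Γ Δ : Set (LEqn L α)) : Prop :=
  ∀ σ : α → L.Term ℕ,
    (∀ q ∈ Γ, VValid L E (q.1.subst σ, q.2.subst σ)) →
      ∃ d ∈ Δ, VValid L E (d.1.subst σ, d.2.subst σ)

/-- `Δ` is `V`-refuting for the variables of `Fin n`. -/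
def VRefuting (L : FirstOrder.Language) (E : Set (Σ α : Type, LEqn L α))
    {n : ℕ} (Δ : Set (LEqn L (Fin n))) : Prop :=
  ∀ e : LEqn L (Fin n), ¬ VValid L E e ↔ VAdm L E {e} Δ

section Aux

open FirstOrder FirstOrder.Language

variable {L : FirstOrder.Language} {γ : Type} {M : Type} [L.Structure M]

lemma realize_congr_on [DecidableEq γ] (a : L.Term γ) {v w : γ → M}
    (h : ∀ x ∈ a.varFinset, v x = w x) : a.realize v = a.realize w := by
  induction a with
  | var x => exact h x (by simp [Term.varFinset])
  | func F ts ih =>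
    simp only [Term.realize]
    congr 1
    funext i
    exact ih i fun x hx => h x (by
      simp only [Term.varFinset, Finset.mem_biUnion]
      exact ⟨i, Finset.mem_univ i, hx⟩)

lemma vvalid_subst {E : Set (Σ α : Type, LEqn L α)} {α δ : Type}
    {e : LEqn L α} (he : VValid L E e) (σ : α → L.Term δ) :
    VValid L E (e.1.subst σ, e.2.subst σ) := by
  intro M _ hM v _
  simp only [Term.realize_subst]
  exact he M hM _ (by simp)

end Aux

theorem stmt2 (L : FirstOrder.Language) (hL : ∀ k, IsEmpty (L.Relations k))
    (E : Set (Σ α : Type, LEqn L α)) {n : ℕ} (Δ : Set (LEqn L (Fin n)))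
    (hΔ : VRefuting L E Δ) {β : Type} (t : Fin n → L.Term β) :
    VDependent L E t ↔ ∃ d ∈ Δ, VValid L E (d.1.subst t, d.2.subst t) := by
  classical
  constructor
  · rintro ⟨e, het, hne⟩
    have hadm := (hΔ e).mp hne
    -- variable bookkeeping
    let S : Finset β := Finset.univ.biUnion fun i => (t i).varFinset
    set l := S.toList with hl
    let f : β → ℕ := fun x => l.idxOf x
    let σ : Fin n → L.Term ℕ := fun i => (t i).relabel f
    have hsub : ∀ (u : L.Term (Fin n)) (M : Type) [L.Structure M] (v : ℕ → M),
        (u.subst σ).realize v = (u.subst t).realize (v ∘ f) := by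
      intro u M _ v
      simp [σ, Term.realize_subst, Term.realize_relabel, Function.comp]
    have hvalidσ : VValid L E ((e.1.subst σ : L.Term ℕ), e.2.subst σ) := by
      intro M _ hM v _
      rw [hsub e.1 M v, hsub e.2 M v]
      exact het M hM _ (by simp)
    obtain ⟨d, hdΔ, hdv⟩ := hadm σ (by rintro q rfl; exact hvalidσ)
    refine ⟨d, hdΔ, ?_⟩
    intro M _ hM v _
    obtain ⟨m₀⟩ := hM.1
    let v' : ℕ → M := fun k => if h : k < l.length then v l[k] else m₀
    have hvf : ∀ x ∈ S, v' (f x) = v x := by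
      intro x hx
      have hmem : x ∈ l := by simpa [hl] using hx
      have hlt : l.idxOf x < l.length := List.idxOf_lt_length_iff.mpr hmem
      simp only [v', f, dif_pos hlt]
      rw [List.getElem_idxOf hlt]
    have hti : ∀ i : Fin n, (t i).realize (v' ∘ f) = (t i).realize v := by
      intro i
      refine realize_congr_on (t i) fun x hx => hvf x ?_
      exact Finset.mem_biUnion.mpr ⟨i, Finset.mem_univ i, hx⟩
    have key : ∀ u : L.Term (Fin n),
        (u.subst t).realize v = (u.subst σ).realize v' := by
      intro u
      rw [hsub u M v']
      simp only [Term.realize_subst]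
      exact congrArg (fun w => Term.realize w u) (funext fun i => (hti i).symm)
    rw [key d.1, key d.2]
    exact hdv M hM v' (by simp)
  · rintro ⟨d, hdΔ, hdt⟩
    refine ⟨d, hdt, fun hd => ?_⟩
    have hrefl : VValid L E ((d.1 : L.Term (Fin n)), d.1) := fun M _ _ v _ => rfl
    have hadm : VAdm L E {((d.1 : L.Term (Fin n)), d.1)} Δ :=
      fun σ _ => ⟨d, hdΔ, vvalid_subst hd σ⟩
    exact (hΔ (d.1, d.1)).mpr hadm hrefl
end

section
/- Let Σ be a set of equations over a variable type β, let t_1, …, t_n be L-terms over β, and let Γ := Σ ∪ {y_i ≈ t_i : i ∈ Fin n}, a set of equations over β ⊕ Fin n. Suppose Π is a set of equations over Fin n such that for every equation ε over Fin n, Γ ⊨_V ε if and only if Π ⊨_V ε. Then t_1, …, t_n are V-independent over Σ if and only if ⊨_V π for every π ∈ Π. -/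
open FirstOrder FirstOrder.Language

lemma gamma_key (L : FirstOrder.Language) (E : Set (Σ α : Type, LEqn L α))
    {β : Type} {n : ℕ} (S : Set (LEqn L β)) (t : Fin n → L.Term β)
    (u w : L.Term (Fin n)) :
    VModels L E (GammaSetS L S t) (u.relabel Sum.inr, w.relabel Sum.inr) ↔
      VModels L E S (u.subst t, w.subst t) := by
  constructor
  · intro h M _ hM v hv
    have := h M hM (Sum.elim v (fun i => (t i).realize v)) ?_
    · simpa [Term.realize_relabel, Term.realize_subst, Function.comp] using this
    · rintro q (⟨p, hp, rfl⟩ | ⟨i, rfl⟩)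
      · simpa [Term.realize_relabel, Function.comp] using hv p hp
      · simp [Term.realize_relabel, Function.comp]
  · intro h M _ hM v' hv'
    have hS : ∀ q ∈ S, q.1.realize (v' ∘ Sum.inl) = q.2.realize (v' ∘ Sum.inl) := by
      intro q hq
      have := hv' _ (Or.inl ⟨q, hq, rfl⟩)
      simpa [Term.realize_relabel] using this
    have hti : ∀ i, v' (Sum.inr i) = (t i).realize (v' ∘ Sum.inl) := by
      intro i
      have := hv' _ (Or.inr ⟨i, rfl⟩)
      simpa [Term.realize_relabel] using this
    have := h M hM (v' ∘ Sum.inl) hS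
    simp only [Term.realize_subst] at this
    simp only [Term.realize_relabel]
    convert this using 2 <;> funext i <;> exact hti i

theorem stmt3 (L : FirstOrder.Language) (hL : ∀ k, IsEmpty (L.Relations k))
    (E : Set (Σ α : Type, LEqn L α)) {β : Type} {n : ℕ}
    (S : Set (LEqn L β)) (t : Fin n → L.Term β)
    (P : Set (LEqn L (Fin n)))
    (hP : ∀ e : LEqn L (Fin n),
      VModels L E (GammaSetS L S t) (e.1.relabel Sum.inr, e.2.relabel Sum.inr) ↔
        VModels L E P e) :
    ¬ VDependentOver L E S t ↔ ∀ p ∈ P, VValid L E p := by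
  constructor
  · intro hnd p hpP
    by_contra hval
    exact hnd ⟨p, (gamma_key L E S t p.1 p.2).1 ((hP p).2
      (fun M _ hM v hv => hv p hpP)), hval⟩
  · rintro hval ⟨e, he, hne⟩
    apply hne
    intro M _ hM v _
    exact (hP e).1 ((gamma_key L E S t e.1 e.2).2 he) M hM v
      (fun q hq => hval q hq M hM v (fun r hr => hr.elim))
end

section
/- For every n ≥ 2, the set Δ_n is Lat-refuting for the variables of Fin n: for every lattice equation ε over Fin n, ε fails to be Lat-valid if and only if {ε} ⊢~_Lat Δ_n. -/
/-- Lattice terms over variable type `α`: first-order terms in the language with exactly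
two binary function symbols (meet and join). -/
inductive LatTerm (α : Type) : Type
  | var : α → LatTerm α
  | meet : LatTerm α → LatTerm α → LatTerm α
  | join : LatTerm α → LatTerm α → LatTerm α

namespace LatTerm

/-- Realization of a lattice term in a lattice `M` under a valuation `v`. -/
def realize {α M : Type} [Lattice M] (v : α → M) : LatTerm α → M
  | var a => v a
  | meet s t => realize v s ⊓ realize v t
  | join s t => realize v s ⊔ realize v t

/-- Simultaneous substitution of lattice terms for variables. -/
def subst {α β : Type} (σ : α → LatTerm β) : LatTerm α → LatTerm β
  | var a => σ a
  | meet s t => meet (subst σ s) (subst σ t)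
  | join s t => join (subst σ s) (subst σ t)

end LatTerm

/-- A lattice equation: a pair of lattice terms. -/
abbrev LatEq (α : Type) : Type := LatTerm α × LatTerm α

/-- The inequation `s ≤ t`, as the equation `s ⊓ t ≈ s`. -/
def leEq {α : Type} (s t : LatTerm α) : LatEq α := (s.meet t, s)

/-- Lat-validity: the two terms have equal realizations in every lattice under
every valuation. -/
def LatValid {α : Type} (e : LatEq α) : Prop :=
  ∀ (M : Type) [Lattice M] (v : α → M), e.1.realize v = e.2.realize v

/-- The join, with a fixed bracketing, of `f 0, …, f m`. -/
def finJoin {α : Type} : {m : ℕ} → (Fin (m + 1) → LatTerm α) → LatTerm α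
  | 0, f => f 0
  | _ + 1, f => LatTerm.join (finJoin fun k => f k.castSucc) (f (Fin.last _))

/-- The meet, with a fixed bracketing, of `f 0, …, f m`. -/
def finMeet {α : Type} : {m : ℕ} → (Fin (m + 1) → LatTerm α) → LatTerm α
  | 0, f => f 0
  | _ + 1, f => LatTerm.meet (finMeet fun k => f k.castSucc) (f (Fin.last _))

/-- `Γ ⊢~_Lat Δ`. -/
def LatAdm {n : ℕ} (Γ Δ : Set (LatEq (Fin n))) : Prop :=
  ∀ σ : Fin n → LatTerm ℕ,
    (∀ e ∈ Γ, LatValid (e.1.subst σ, e.2.subst σ)) →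
      ∃ d ∈ Δ, LatValid (d.1.subst σ, d.2.subst σ)

/-- `Δ` is Lat-refuting for the variables of `Fin n`. -/
def LatRefuting {n : ℕ} (Δ : Set (LatEq (Fin n))) : Prop :=
  ∀ e : LatEq (Fin n), ¬ LatValid e ↔ LatAdm {e} Δ

/-- The set `Δ_n` (for `n = m + 2`) of the `2n` equations
`y_i ≤ ⊔_{j ≠ i} y_j` and `⊓_{j ≠ i} y_j ≤ y_i` for `i ∈ Fin n`. -/
def DeltaLat (m : ℕ) : Set (LatEq (Fin (m + 2))) :=
  { e | ∃ i : Fin (m + 2),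
      e = leEq (.var i) (finJoin fun k : Fin (m + 1) => .var (i.succAbove k)) ∨
      e = leEq (finMeet fun k : Fin (m + 1) => .var (i.succAbove k)) (.var i) }

/-! ### Auxiliary development: Whitman's solution to the word problem for free lattices,
and Jónsson's criterion for free generation. -/

namespace LatTerm

variable {α : Type}

/-- Whitman's cut-free sequent calculus for lattice inequalities. -/
inductive Wle : LatTerm α → LatTerm α → Prop
  | refl_var (a : α) : Wle (var a) (var a)
  | join_left {s₁ s₂ t : LatTerm α} : Wle s₁ t → Wle s₂ t → Wle (join s₁ s₂) t
  | meet_right {s t₁ t₂ : LatTerm α} : Wle s t₁ → Wle s t₂ → Wle s (meet t₁ t₂)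
  | meet_left_l {s₁ s₂ t : LatTerm α} : Wle s₁ t → Wle (meet s₁ s₂) t
  | meet_left_r {s₁ s₂ t : LatTerm α} : Wle s₂ t → Wle (meet s₁ s₂) t
  | join_right_l {s t₁ t₂ : LatTerm α} : Wle s t₁ → Wle s (join t₁ t₂)
  | join_right_r {s t₁ t₂ : LatTerm α} : Wle s t₂ → Wle s (join t₁ t₂)

theorem Wle.rfl : ∀ t : LatTerm α, Wle t t
  | var a => .refl_var a
  | meet s t => .meet_right (.meet_left_l (Wle.rfl s)) (.meet_left_r (Wle.rfl t))
  | join s t => .join_left (.join_right_l (Wle.rfl s)) (.join_right_r (Wle.rfl t))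

/-- Size of a term. -/
def size : LatTerm α → ℕ
  | var _ => 1
  | meet s t => size s + size t + 1
  | join s t => size s + size t + 1

theorem size_pos (t : LatTerm α) : 0 < size t := by
  cases t <;> simp [size]

/-- Cut admissibility / transitivity of the Whitman relation. -/
theorem Wle.trans_aux :
    ∀ N : ℕ, ∀ {r s t : LatTerm α}, size r + size s + size t ≤ N →
      Wle r s → Wle s t → Wle r t := by
  intro N
  induction N with
  | zero =>
    intro r s t h _ _
    have := size_pos r
    omega
  | succ N ih =>
    intro r s t hN hrs hst
    cases hrs with
    | refl_var a => exact hst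
    | join_left h₁ h₂ =>
      exact .join_left (ih (by simp only [size] at hN ⊢; omega) h₁ hst)
        (ih (by simp only [size] at hN ⊢; omega) h₂ hst)
    | meet_left_l h =>
      exact .meet_left_l (ih (by simp only [size] at hN ⊢; omega) h hst)
    | meet_left_r h =>
      exact .meet_left_r (ih (by simp only [size] at hN ⊢; omega) h hst)
    | meet_right h₁ h₂ =>
      cases hst with
      | meet_left_l h => exact ih (by simp only [size] at hN ⊢; omega) h₁ h
      | meet_left_r h => exact ih (by simp only [size] at hN ⊢; omega) h₂ h
      | meet_right h₃ h₄ =>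
        exact .meet_right (ih (by simp only [size] at hN ⊢; omega) (.meet_right h₁ h₂) h₃)
          (ih (by simp only [size] at hN ⊢; omega) (.meet_right h₁ h₂) h₄)
      | join_right_l h => exact .join_right_l (ih (by simp only [size] at hN ⊢; omega) (.meet_right h₁ h₂) h)
      | join_right_r h => exact .join_right_r (ih (by simp only [size] at hN ⊢; omega) (.meet_right h₁ h₂) h)
    | join_right_l h =>
      cases hst with
      | join_left h₁ h₂ => exact ih (by simp only [size] at hN ⊢; omega) h h₁
      | meet_right h₁ h₂ =>
        exact .meet_right (ih (by simp only [size] at hN ⊢; omega) (.join_right_l h) h₁)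
          (ih (by simp only [size] at hN ⊢; omega) (.join_right_l h) h₂)
      | join_right_l h₁ => exact .join_right_l (ih (by simp only [size] at hN ⊢; omega) (.join_right_l h) h₁)
      | join_right_r h₁ => exact .join_right_r (ih (by simp only [size] at hN ⊢; omega) (.join_right_l h) h₁)
    | join_right_r h =>
      cases hst with
      | join_left h₁ h₂ => exact ih (by simp only [size] at hN ⊢; omega) h h₂
      | meet_right h₁ h₂ =>
        exact .meet_right (ih (by simp only [size] at hN ⊢; omega) (.join_right_r h) h₁)
          (ih (by simp only [size] at hN ⊢; omega) (.join_right_r h) h₂)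
      | join_right_l h₁ => exact .join_right_l (ih (by simp only [size] at hN ⊢; omega) (.join_right_r h) h₁)
      | join_right_r h₁ => exact .join_right_r (ih (by simp only [size] at hN ⊢; omega) (.join_right_r h) h₁)

theorem Wle.trans {r s t : LatTerm α} (h₁ : Wle r s) (h₂ : Wle s t) : Wle r t :=
  Wle.trans_aux (size r + size s + size t) le_rfl h₁ h₂

theorem Wle.meet_inv {s t₁ t₂ : LatTerm α} (h : Wle s (meet t₁ t₂)) :
    Wle s t₁ ∧ Wle s t₂ :=
  ⟨h.trans (.meet_left_l (Wle.rfl t₁)), h.trans (.meet_left_r (Wle.rfl t₂))⟩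

theorem Wle.join_inv {s₁ s₂ t : LatTerm α} (h : Wle (join s₁ s₂) t) :
    Wle s₁ t ∧ Wle s₂ t :=
  ⟨(Wle.join_right_l (Wle.rfl s₁)).trans h, (Wle.join_right_r (Wle.rfl s₂)).trans h⟩

/-- Whitman's condition `(W)`, by inversion of the cut-free calculus. -/
theorem Wle.meet_join_inv {a b c d : LatTerm α} (h : Wle (meet a b) (join c d)) :
    Wle a (join c d) ∨ Wle b (join c d) ∨ Wle (meet a b) c ∨ Wle (meet a b) d := by
  cases h with
  | meet_left_l h => exact .inl h
  | meet_left_r h => exact .inr (.inl h)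
  | join_right_l h => exact .inr (.inr (.inl h))
  | join_right_r h => exact .inr (.inr (.inr h))

/-- Soundness of the Whitman calculus. -/
theorem Wle.realize_le {M : Type} [Lattice M] (v : α → M) {s t : LatTerm α}
    (h : Wle s t) : s.realize v ≤ t.realize v := by
  induction h with
  | refl_var a => exact le_rfl
  | join_left _ _ ih₁ ih₂ => exact sup_le ih₁ ih₂
  | meet_right _ _ ih₁ ih₂ => exact le_inf ih₁ ih₂
  | meet_left_l _ ih => exact le_trans inf_le_left ih
  | meet_left_r _ ih => exact le_trans inf_le_right ih
  | join_right_l _ ih => exact le_trans ih le_sup_left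
  | join_right_r _ ih => exact le_trans ih le_sup_right

/-- Equivalence of terms: mutual Whitman inequality. -/
instance latticeSetoid (α : Type) : Setoid (LatTerm α) where
  r s t := Wle s t ∧ Wle t s
  iseqv := ⟨fun t => ⟨Wle.rfl t, Wle.rfl t⟩, fun h => ⟨h.2, h.1⟩,
    fun h₁ h₂ => ⟨h₁.1.trans h₂.1, h₂.2.trans h₁.2⟩⟩

/-- The free lattice on `α` as a quotient of terms. -/
abbrev FLQ (α : Type) : Type := Quotient (latticeSetoid α)

instance : Lattice (FLQ α) where
  le := Quotient.lift₂ Wle (by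
    intro a b a' b' ha hb
    exact propext ⟨fun h => (ha.2.trans h).trans hb.1, fun h => (ha.1.trans h).trans hb.2⟩)
  le_refl x := Quotient.inductionOn x fun t => Wle.rfl t
  le_trans x y z := Quotient.inductionOn₃ x y z fun a b c h₁ h₂ => Wle.trans h₁ h₂
  le_antisymm x y := Quotient.inductionOn₂ x y fun a b h₁ h₂ => Quotient.sound ⟨h₁, h₂⟩
  sup := Quotient.map₂ join (by
    rintro a a' ha b b' hb
    exact ⟨.join_left (ha.1.trans (.join_right_l (Wle.rfl _)))
        (hb.1.trans (.join_right_r (Wle.rfl _))),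
      .join_left (ha.2.trans (.join_right_l (Wle.rfl _)))
        (hb.2.trans (.join_right_r (Wle.rfl _)))⟩)
  inf := Quotient.map₂ meet (by
    rintro a a' ha b b' hb
    exact ⟨.meet_right (.meet_left_l ha.1) (.meet_left_r hb.1),
      .meet_right (.meet_left_l ha.2) (.meet_left_r hb.2)⟩)
  le_sup_left x y := Quotient.inductionOn₂ x y fun a b => Wle.join_right_l (Wle.rfl a)
  le_sup_right x y := Quotient.inductionOn₂ x y fun a b => Wle.join_right_r (Wle.rfl b)
  sup_le x y z := Quotient.inductionOn₃ x y z fun a b c h₁ h₂ => Wle.join_left h₁ h₂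
  inf_le_left x y := Quotient.inductionOn₂ x y fun a b => Wle.meet_left_l (Wle.rfl a)
  inf_le_right x y := Quotient.inductionOn₂ x y fun a b => Wle.meet_left_r (Wle.rfl b)
  le_inf x y z := Quotient.inductionOn₃ x y z fun a b c h₁ h₂ => Wle.meet_right h₁ h₂

theorem realize_mk (p : LatTerm α) :
    realize (fun a => (⟦var a⟧ : FLQ α)) p = ⟦p⟧ := by
  induction p with
  | var a => rfl
  | meet s t ihs iht =>
    show realize _ s ⊓ realize _ t = _
    rw [ihs, iht]; rfl
  | join s t ihs iht =>
    show realize _ s ⊔ realize _ t = _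
    rw [ihs, iht]; rfl

/-- Completeness of the Whitman calculus. -/
theorem wle_of_latValid {p q : LatTerm α} (h : LatValid (p, q)) : Wle p q ∧ Wle q p := by
  have h' := h (FLQ α) (fun a => ⟦var a⟧)
  simp only at h'
  rw [realize_mk, realize_mk] at h'
  exact Quotient.exact h'

theorem latValid_of_wle {p q : LatTerm α} (h₁ : Wle p q) (h₂ : Wle q p) :
    LatValid (p, q) := fun M _ v => le_antisymm (h₁.realize_le v) (h₂.realize_le v)

theorem latValid_leEq_of_wle {s t : LatTerm α} (h : Wle s t) : LatValid (leEq s t) := by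
  intro M _ v
  show s.realize v ⊓ t.realize v = s.realize v
  exact inf_eq_left.mpr (h.realize_le v)

theorem wle_of_latValid_leEq {s t : LatTerm α} (h : LatValid (leEq s t)) : Wle s t := by
  have h' := (wle_of_latValid (p := s.meet t) (q := s) h).2
  exact h'.meet_inv.2

theorem realize_subst {β M : Type} [Lattice M] (v : β → M) (σ : α → LatTerm β) :
    ∀ p : LatTerm α, (p.subst σ).realize v = p.realize (fun a => (σ a).realize v) := by
  intro p
  induction p with
  | var a => rfl
  | meet s t ihs iht => simp [subst, realize, ihs, iht]
  | join s t ihs iht => simp [subst, realize, ihs, iht]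

theorem subst_finJoin {β : Type} (σ : α → LatTerm β) :
    ∀ {m : ℕ} (f : Fin (m + 1) → LatTerm α),
      (finJoin f).subst σ = finJoin fun k => (f k).subst σ
  | 0, f => rfl
  | m + 1, f => by
    show ((finJoin fun k => f k.castSucc).subst σ).join _ = _
    rw [subst_finJoin σ (fun k => f k.castSucc)]
    rfl

theorem subst_finMeet {β : Type} (σ : α → LatTerm β) :
    ∀ {m : ℕ} (f : Fin (m + 1) → LatTerm α),
      (finMeet f).subst σ = finMeet fun k => (f k).subst σ
  | 0, f => rfl
  | m + 1, f => by
    show ((finMeet fun k => f k.castSucc).subst σ).meet _ = _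
    rw [subst_finMeet σ (fun k => f k.castSucc)]
    rfl

theorem wle_finJoin : ∀ {m : ℕ} (f : Fin (m + 1) → LatTerm α) (k : Fin (m + 1)),
    Wle (f k) (finJoin f)
  | 0, f, k => by
    have hk : k = 0 := Fin.eq_zero k
    subst hk
    exact Wle.rfl _
  | m + 1, f, k => by
    rcases Fin.eq_castSucc_or_eq_last k with ⟨k', rfl⟩ | rfl
    · exact .join_right_l (wle_finJoin (fun j => f j.castSucc) k')
    · exact .join_right_r (Wle.rfl _)

theorem finMeet_wle : ∀ {m : ℕ} (f : Fin (m + 1) → LatTerm α) (k : Fin (m + 1)),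
    Wle (finMeet f) (f k)
  | 0, f, k => by
    have hk : k = 0 := Fin.eq_zero k
    subst hk
    exact Wle.rfl _
  | m + 1, f, k => by
    rcases Fin.eq_castSucc_or_eq_last k with ⟨k', rfl⟩ | rfl
    · exact .meet_left_l (finMeet_wle (fun j => f j.castSucc) k')
    · exact .meet_left_r (Wle.rfl _)

theorem realize_finJoin_le {M : Type} [Lattice M] (v : α → M) (c : M) :
    ∀ {m : ℕ} (f : Fin (m + 1) → LatTerm α), (∀ k, (f k).realize v ≤ c) →
      (finJoin f).realize v ≤ c
  | 0, f, h => h 0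
  | m + 1, f, h => by
    show (finJoin fun k => f k.castSucc).realize v ⊔ (f (Fin.last _)).realize v ≤ c
    exact sup_le (realize_finJoin_le v c (fun k => f k.castSucc) (fun k => h _)) (h _)

theorem le_realize_finMeet {M : Type} [Lattice M] (v : α → M) (c : M) :
    ∀ {m : ℕ} (f : Fin (m + 1) → LatTerm α), (∀ k, c ≤ (f k).realize v) →
      c ≤ (finMeet f).realize v
  | 0, f, h => h 0
  | m + 1, f, h => by
    show c ≤ (finMeet fun k => f k.castSucc).realize v ⊓ (f (Fin.last _)).realize v
    exact le_inf (le_realize_finMeet v c (fun k => f k.castSucc) (fun k => h _)) (h _)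

theorem latValid_leEq_subst {β : Type} (σ : α → LatTerm β) {s t : LatTerm α}
    (h : Wle (s.subst σ) (t.subst σ)) :
    LatValid ((leEq s t).1.subst σ, (leEq s t).2.subst σ) := by
  intro M _ v
  show (s.subst σ).realize v ⊓ (t.subst σ).realize v = (s.subst σ).realize v
  exact inf_eq_left.mpr (h.realize_le v)

section Jonsson

variable {m : ℕ} (A : Fin (m + 2) → LatTerm ℕ)

/-- The join of the `A j`, `j ≠ i`. -/
def JA (i : Fin (m + 2)) : LatTerm ℕ := finJoin fun k : Fin (m + 1) => A (i.succAbove k)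

/-- The meet of the `A j`, `j ≠ i`. -/
def MA (i : Fin (m + 2)) : LatTerm ℕ := finMeet fun k : Fin (m + 1) => A (i.succAbove k)

theorem wle_JA {i j : Fin (m + 2)} (h : j ≠ i) : Wle (A j) (JA A i) := by
  obtain ⟨k, hk⟩ := Fin.exists_succAbove_eq h
  rw [← hk]
  exact wle_finJoin (fun k => A (i.succAbove k)) k

theorem MA_wle {i j : Fin (m + 2)} (h : j ≠ i) : Wle (MA A i) (A j) := by
  obtain ⟨k, hk⟩ := Fin.exists_succAbove_eq h
  rw [← hk]
  exact finMeet_wle (fun k => A (i.succAbove k)) k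

/-- Dichotomy: each element of the sublattice generated by the `A j` is either above `A i`
or below the join of the other `A j`. -/
theorem dichJ (i : Fin (m + 2)) :
    ∀ v : LatTerm (Fin (m + 2)), Wle (A i) (v.subst A) ∨ Wle (v.subst A) (JA A i) := by
  intro v
  induction v with
  | var j =>
    by_cases h : j = i
    · subst h; exact Or.inl (Wle.rfl _)
    · exact Or.inr (wle_JA A h)
  | meet v₁ v₂ ih₁ ih₂ =>
    rcases ih₁ with h₁ | h₁
    · rcases ih₂ with h₂ | h₂
      · exact Or.inl (.meet_right h₁ h₂)
      · exact Or.inr (.meet_left_r h₂)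
    · exact Or.inr (.meet_left_l h₁)
  | join v₁ v₂ ih₁ ih₂ =>
    rcases ih₁ with h₁ | h₁
    · exact Or.inl (.join_right_l h₁)
    · rcases ih₂ with h₂ | h₂
      · exact Or.inl (.join_right_r h₂)
      · exact Or.inr (.join_left h₁ h₂)

theorem dichM (i : Fin (m + 2)) :
    ∀ v : LatTerm (Fin (m + 2)), Wle (v.subst A) (A i) ∨ Wle (MA A i) (v.subst A) := by
  intro v
  induction v with
  | var j =>
    by_cases h : j = i
    · subst h; exact Or.inl (Wle.rfl _)
    · exact Or.inr (MA_wle A h)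
  | join v₁ v₂ ih₁ ih₂ =>
    rcases ih₁ with h₁ | h₁
    · rcases ih₂ with h₂ | h₂
      · exact Or.inl (.join_left h₁ h₂)
      · exact Or.inr (.join_right_r h₂)
    · exact Or.inr (.join_right_l h₁)
  | meet v₁ v₂ ih₁ ih₂ =>
    rcases ih₁ with h₁ | h₁
    · exact Or.inl (.meet_left_l h₁)
    · rcases ih₂ with h₂ | h₂
      · exact Or.inl (.meet_left_r h₂)
      · exact Or.inr (.meet_right h₁ h₂)

/-- Jónsson's theorem: an independent family in the free lattice generates a free
sublattice. -/
theorem jonsson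
    (hJ : ∀ i, ¬ Wle (A i) (JA A i)) (hM : ∀ i, ¬ Wle (MA A i) (A i)) :
    ∀ N (s t : LatTerm (Fin (m + 2))), size s + size t ≤ N →
      Wle (s.subst A) (t.subst A) → Wle s t := by
  intro N
  induction N with
  | zero =>
    intro s t h _
    have := size_pos s
    have := size_pos t
    omega
  | succ N ih =>
    intro s t hN h
    cases t with
    | meet t₁ t₂ =>
      rw [show (meet t₁ t₂).subst A = LatTerm.meet (t₁.subst A) (t₂.subst A) from rfl] at h
      obtain ⟨h₁, h₂⟩ := h.meet_inv
      exact .meet_right (ih s t₁ (by simp only [size] at hN ⊢; omega) h₁)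
        (ih s t₂ (by simp only [size] at hN ⊢; omega) h₂)
    | var j =>
      cases s with
      | join s₁ s₂ =>
        rw [show (join s₁ s₂).subst A = LatTerm.join (s₁.subst A) (s₂.subst A) from rfl] at h
        obtain ⟨h₁, h₂⟩ := h.join_inv
        exact .join_left (ih s₁ (var j) (by simp only [size] at hN ⊢; omega) h₁)
          (ih s₂ (var j) (by simp only [size] at hN ⊢; omega) h₂)
      | var i =>
        by_cases hij : i = j
        · subst hij; exact .refl_var i
        · exact absurd (Wle.trans h (wle_JA A (Ne.symm hij))) (hJ i)
      | meet s₁ s₂ =>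
        rcases dichM A j s₁ with h₁ | h₁
        · exact .meet_left_l (ih s₁ (var j) (by simp only [size] at hN ⊢; omega) h₁)
        · rcases dichM A j s₂ with h₂ | h₂
          · exact .meet_left_r (ih s₂ (var j) (by simp only [size] at hN ⊢; omega) h₂)
          · exact absurd (Wle.trans (Wle.meet_right h₁ h₂) h) (hM j)
    | join t₁ t₂ =>
      cases s with
      | join s₁ s₂ =>
        rw [show (join s₁ s₂).subst A = LatTerm.join (s₁.subst A) (s₂.subst A) from rfl] at h
        obtain ⟨h₁, h₂⟩ := h.join_inv
        exact .join_left (ih s₁ (join t₁ t₂) (by simp only [size] at hN ⊢; omega) h₁)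
          (ih s₂ (join t₁ t₂) (by simp only [size] at hN ⊢; omega) h₂)
      | var i =>
        rcases dichJ A i t₁ with h₁ | h₁
        · exact .join_right_l (ih (var i) t₁ (by simp only [size] at hN ⊢; omega) h₁)
        · rcases dichJ A i t₂ with h₂ | h₂
          · exact .join_right_r (ih (var i) t₂ (by simp only [size] at hN ⊢; omega) h₂)
          · exact absurd (Wle.trans h (Wle.join_left h₁ h₂)) (hJ i)
      | meet s₁ s₂ =>
        rw [show (meet s₁ s₂).subst A = LatTerm.meet (s₁.subst A) (s₂.subst A) from rfl,
          show (join t₁ t₂).subst A = LatTerm.join (t₁.subst A) (t₂.subst A) from rfl] at h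
        rcases h.meet_join_inv with h' | h' | h' | h'
        · exact .meet_left_l (ih s₁ (join t₁ t₂) (by simp only [size] at hN ⊢; omega) h')
        · exact .meet_left_r (ih s₂ (join t₁ t₂) (by simp only [size] at hN ⊢; omega) h')
        · exact .join_right_l (ih (meet s₁ s₂) t₁ (by simp only [size] at hN ⊢; omega) h')
        · exact .join_right_r (ih (meet s₁ s₂) t₂ (by simp only [size] at hN ⊢; omega) h')

end Jonsson

end LatTerm

theorem stmt4 (m : ℕ) : LatRefuting (DeltaLat m) := by
  intro e
  obtain ⟨p, q⟩ := e
  constructor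
  · -- ¬ valid → admissible
    intro hnv σ hσ
    by_contra hno
    push_neg at hno
    have hJ : ∀ i : Fin (m + 2), ¬ LatTerm.Wle (σ i) (LatTerm.JA σ i) := by
      intro i hw
      refine hno (leEq (.var i) (finJoin fun k : Fin (m + 1) => .var (i.succAbove k)))
        ⟨i, Or.inl rfl⟩ (LatTerm.latValid_leEq_subst σ ?_)
      rw [LatTerm.subst_finJoin]
      exact hw
    have hM : ∀ i : Fin (m + 2), ¬ LatTerm.Wle (LatTerm.MA σ i) (σ i) := by
      intro i hw
      refine hno (leEq (finMeet fun k : Fin (m + 1) => .var (i.succAbove k)) (.var i))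
        ⟨i, Or.inr rfl⟩ (LatTerm.latValid_leEq_subst σ ?_)
      rw [LatTerm.subst_finMeet]
      exact hw
    have hval := hσ (p, q) rfl
    obtain ⟨h₁, h₂⟩ := LatTerm.wle_of_latValid hval
    have hw₁ := LatTerm.jonsson σ hJ hM (p.size + q.size) p q le_rfl h₁
    have hw₂ := LatTerm.jonsson σ hJ hM (q.size + p.size) q p le_rfl h₂
    exact hnv (LatTerm.latValid_of_wle hw₁ hw₂)
  · -- admissible → ¬ valid
    intro hadm hv
    obtain ⟨d, hd, hvd⟩ := hadm (fun i => .var (i : ℕ)) (by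
      rintro e' rfl
      intro M _ v
      rw [LatTerm.realize_subst, LatTerm.realize_subst]
      exact hv M _)
    obtain ⟨i, hcase | hcase⟩ := hd
    · subst hcase
      have hB := hvd Bool (fun k => decide (k = (i : ℕ)))
      simp only [leEq, LatTerm.subst, LatTerm.realize] at hB
      rw [LatTerm.subst_finJoin] at hB
      refine absurd (le_trans (le_trans ?_ (inf_eq_left.mp hB))
        (LatTerm.realize_finJoin_le _ false _ (fun k => ?_)))
        (by decide : ¬ ((true : Bool) ≤ false))
      · simp
      · show (decide (((i.succAbove k : Fin (m + 2)) : ℕ) = ((i : Fin (m + 2)) : ℕ)) : Bool)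
          ≤ false
        have hne : ((i.succAbove k : Fin (m + 2)) : ℕ) ≠ ((i : Fin (m + 2)) : ℕ) :=
          fun hvz => Fin.succAbove_ne i k (Fin.val_injective hvz)
        rw [decide_eq_false hne]
    · subst hcase
      have hB := hvd Bool (fun k => decide (k ≠ (i : ℕ)))
      simp only [leEq, LatTerm.subst, LatTerm.realize] at hB
      rw [LatTerm.subst_finMeet] at hB
      refine absurd (le_trans (le_trans
        (LatTerm.le_realize_finMeet _ true _ (fun k => ?_)) (inf_eq_left.mp hB)) ?_)
        (by decide : ¬ ((true : Bool) ≤ false))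
      · show (true : Bool) ≤
          (decide (¬ ((i.succAbove k : Fin (m + 2)) : ℕ) = ((i : Fin (m + 2)) : ℕ)) : Bool)
        have hne : ((i.succAbove k : Fin (m + 2)) : ℕ) ≠ ((i : Fin (m + 2)) : ℕ) :=
          fun hvz => Fin.succAbove_ne i k (Fin.val_injective hvz)
        rw [decide_eq_true hne]
      · simp
end

section
/- For every n ≥ 2, no proper subset of Δ_n is Lat-refuting for the variables of Fin n; that is, Δ_n is a minimal Lat-refuting set. -/
namespace Stmt5Aux
open LatTerm

lemma realize_subst {α β M : Type} [Lattice M] (σ : α → LatTerm β) (v : β → M)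
    (t : LatTerm α) :
    (t.subst σ).realize v = t.realize (fun a => (σ a).realize v) := by
  induction t with
  | var a => rfl
  | meet s t hs ht => simp [LatTerm.subst, LatTerm.realize, hs, ht]
  | join s t hs ht => simp [LatTerm.subst, LatTerm.realize, hs, ht]

lemma mem_finJoin {γ α : Type} {m : ℕ} (v : α → Set γ) (f : Fin (m+1) → LatTerm α) (x : γ) :
    x ∈ (finJoin f).realize v ↔ ∃ k, x ∈ (f k).realize v := by
  induction m with
  | zero =>
    exact ⟨fun h => ⟨0, h⟩, fun ⟨k, h⟩ => by
      obtain rfl : k = 0 := Fin.fin_one_eq_zero k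
      exact h⟩
  | succ m ih =>
    show x ∈ (finJoin fun k => f k.castSucc).realize v ∪ (f (Fin.last _)).realize v ↔ _
    rw [Set.mem_union, ih]
    constructor
    · rintro (⟨k, hk⟩ | h)
      · exact ⟨k.castSucc, hk⟩
      · exact ⟨Fin.last _, h⟩
    · rintro ⟨k, hk⟩
      cases k using Fin.lastCases with
      | last => exact Or.inr hk
      | cast k => exact Or.inl ⟨k, hk⟩

lemma mem_finMeet {γ α : Type} {m : ℕ} (v : α → Set γ) (f : Fin (m+1) → LatTerm α) (x : γ) :
    x ∈ (finMeet f).realize v ↔ ∀ k, x ∈ (f k).realize v := by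
  induction m with
  | zero =>
    exact ⟨fun h k => by obtain rfl : k = 0 := Fin.fin_one_eq_zero k; exact h, fun h => h 0⟩
  | succ m ih =>
    show x ∈ (finMeet fun k => f k.castSucc).realize v ∩ (f (Fin.last _)).realize v ↔ _
    rw [Set.mem_inter_iff, ih]
    constructor
    · rintro ⟨h1, h2⟩ k
      cases k using Fin.lastCases with
      | last => exact h2
      | cast k => exact h1 k
    · intro h
      exact ⟨fun k => h k.castSucc, h (Fin.last _)⟩

lemma finJoin_congr {α β M : Type} [Lattice M] {m : ℕ} {f : Fin (m+1) → LatTerm α}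
    {g : Fin (m+1) → LatTerm β} {v : α → M} {w : β → M}
    (h : ∀ k, (f k).realize v = (g k).realize w) :
    (finJoin f).realize v = (finJoin g).realize w := by
  induction m with
  | zero => exact h 0
  | succ m ih =>
    show (finJoin fun k => f k.castSucc).realize v ⊔ (f (Fin.last _)).realize v = _
    rw [ih (fun k => h k.castSucc), h (Fin.last _)]
    rfl

lemma finMeet_congr {α β M : Type} [Lattice M] {m : ℕ} {f : Fin (m+1) → LatTerm α}
    {g : Fin (m+1) → LatTerm β} {v : α → M} {w : β → M}
    (h : ∀ k, (f k).realize v = (g k).realize w) :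
    (finMeet f).realize v = (finMeet g).realize w := by
  induction m with
  | zero => exact h 0
  | succ m ih =>
    show (finMeet fun k => f k.castSucc).realize v ⊓ (f (Fin.last _)).realize v = _
    rw [ih (fun k => h k.castSucc), h (Fin.last _)]
    rfl

lemma fin2_succAbove : ∀ (i l : Fin 2), l ≠ i → l.succAbove (0 : Fin 1) = i := by decide

end Stmt5Aux

namespace Stmt5Aux
open LatTerm

/-- The equation `y_i ≤ ⊔_{j ≠ i} y_j`. -/
def jEq (m : ℕ) (i : Fin (m+2)) : LatEq (Fin (m+2)) :=
  leEq (.var i) (finJoin fun k : Fin (m+1) => .var (i.succAbove k))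

/-- The equation `⊓_{j ≠ i} y_j ≤ y_i`. -/
def mEq (m : ℕ) (i : Fin (m+2)) : LatEq (Fin (m+2)) :=
  leEq (finMeet fun k : Fin (m+1) => .var (i.succAbove k)) (.var i)

lemma mem_deltaLat {m : ℕ} {e : LatEq (Fin (m+2))} :
    e ∈ DeltaLat m ↔ ∃ i, e = jEq m i ∨ e = mEq m i := Iff.rfl

lemma mEq_zero (i l : Fin 2) (h : l ≠ i) : mEq 0 l = jEq 0 i := by
  have h1 : l.succAbove 0 = i := fin2_succAbove i l h
  have h2 : i.succAbove 0 = l := fin2_succAbove l i (Ne.symm h)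
  simp only [mEq, jEq, leEq, finMeet, finJoin, h1, h2]

lemma jEq_zero (i l : Fin 2) (h : l ≠ i) : jEq 0 l = mEq 0 i := by
  have h1 : l.succAbove 0 = i := fin2_succAbove i l h
  have h2 : i.succAbove 0 = l := fin2_succAbove l i (Ne.symm h)
  simp only [mEq, jEq, leEq, finMeet, finJoin, h1, h2]

/-- "singleton" valuation. -/
def vA (m : ℕ) : ℕ → Set (Fin (m+2)) := fun t => {x | (x : ℕ) = t}
/-- "complement of singleton" valuation. -/
def vB (m : ℕ) : ℕ → Set (Fin (m+2)) := fun t => {x | (x : ℕ) ≠ t}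

@[simp] lemma mem_vA {m : ℕ} {x j : Fin (m+2)} : x ∈ vA m (j : ℕ) ↔ x = j := by
  simp [vA, Fin.val_inj]

@[simp] lemma mem_vB {m : ℕ} {x j : Fin (m+2)} : x ∈ vB m (j : ℕ) ↔ x ≠ j := by
  simp [vB, Fin.val_inj]

def sigA (m : ℕ) (i : Fin (m+2)) : Fin (m+2) → LatTerm ℕ := fun j =>
  if j = i then
    .meet (.var (i : ℕ)) (finJoin fun k : Fin (m+1) => .var ((i.succAbove k : Fin (m+2)) : ℕ))
  else .var (j : ℕ)

def sigB (m : ℕ) (i : Fin (m+2)) : Fin (m+2) → LatTerm ℕ := fun j =>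
  if j = i then
    .join (.var (i : ℕ)) (finMeet fun k : Fin (m+1) => .var ((i.succAbove k : Fin (m+2)) : ℕ))
  else .var (j : ℕ)

lemma sigA_same (m : ℕ) (i : Fin (m+2)) : sigA m i i =
    .meet (.var (i : ℕ)) (finJoin fun k : Fin (m+1) => .var ((i.succAbove k : Fin (m+2)) : ℕ)) :=
  if_pos rfl

lemma sigA_of_ne (m : ℕ) (i j : Fin (m+2)) (h : j ≠ i) : sigA m i j = .var (j : ℕ) := if_neg h

lemma sigB_same (m : ℕ) (i : Fin (m+2)) : sigB m i i =
    .join (.var (i : ℕ)) (finMeet fun k : Fin (m+1) => .var ((i.succAbove k : Fin (m+2)) : ℕ)) :=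
  if_pos rfl

lemma sigB_of_ne (m : ℕ) (i j : Fin (m+2)) (h : j ≠ i) : sigB m i j = .var (j : ℕ) := if_neg h

lemma not_valid_jEq (m : ℕ) (i : Fin (m+2)) : ¬ LatValid (jEq m i) := by
  intro hv
  have hset := hv (Set (Fin (m+2))) (fun j => {x | j = i})
  simp only [jEq, leEq, LatTerm.realize, eq_self_iff_true, Set.setOf_true] at hset
  have hi : i ∈ (Set.univ : Set (Fin (m+2))) := trivial
  rw [← hset] at hi
  have h2 := hi.2
  rw [mem_finJoin] at h2
  obtain ⟨k, hk⟩ := h2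
  exact Fin.succAbove_ne i k hk

lemma not_valid_mEq (m : ℕ) (i : Fin (m+2)) : ¬ LatValid (mEq m i) := by
  intro hv
  have hset := hv (Set (Fin (m+2))) (fun j => {x | j ≠ i})
  simp only [mEq, leEq, LatTerm.realize] at hset
  have hi : i ∈ (finMeet fun k : Fin (m+1) => LatTerm.var (i.succAbove k)).realize
      (fun j => {x : Fin (m+2) | j ≠ i}) := by
    rw [mem_finMeet]
    intro k
    exact Fin.succAbove_ne i k
  rw [← hset] at hi
  exact hi.2 rfl

lemma valid_sigA (m : ℕ) (i : Fin (m+2)) :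
    LatValid ((jEq m i).1.subst (sigA m i), (jEq m i).2.subst (sigA m i)) := by
  intro M _ v
  simp only [jEq, leEq, realize_subst, LatTerm.realize]
  have hJ : (finJoin fun k : Fin (m+1) => LatTerm.var (i.succAbove k)).realize
        (fun a => (sigA m i a).realize v)
      = (finJoin fun k : Fin (m+1) => LatTerm.var ((i.succAbove k : Fin (m+2)) : ℕ)).realize v := by
    apply finJoin_congr
    intro k
    simp only [LatTerm.realize, sigA_of_ne m i _ (Fin.succAbove_ne i k)]
  rw [hJ, sigA_same]
  simp only [LatTerm.realize]
  rw [inf_assoc, inf_idem]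

lemma valid_sigB (m : ℕ) (i : Fin (m+2)) :
    LatValid ((mEq m i).1.subst (sigB m i), (mEq m i).2.subst (sigB m i)) := by
  intro M _ v
  simp only [mEq, leEq, realize_subst, LatTerm.realize]
  have hM : (finMeet fun k : Fin (m+1) => LatTerm.var (i.succAbove k)).realize
        (fun a => (sigB m i a).realize v)
      = (finMeet fun k : Fin (m+1) => LatTerm.var ((i.succAbove k : Fin (m+2)) : ℕ)).realize v := by
    apply finMeet_congr
    intro k
    simp only [LatTerm.realize, sigB_of_ne m i _ (Fin.succAbove_ne i k)]
  rw [hM, sigB_same]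
  simp only [LatTerm.realize]
  rw [sup_comm, inf_sup_self]

end Stmt5Aux

namespace Stmt5Aux
open LatTerm

lemma valid_le {α γ : Type} {s t : LatTerm α} (h : LatValid (s.meet t, s)) (v : α → Set γ)
    {x : γ} (hx : x ∈ s.realize v) : x ∈ t.realize v := by
  have heq := h (Set γ) v
  simp only [LatTerm.realize] at heq
  rw [← heq] at hx
  exact hx.2

lemma caseA (m : ℕ) (Δ' : Set (LatEq (Fin (m+2)))) (hsub : Δ' ⊆ DeltaLat m) (i : Fin (m+2))
    (hmem : jEq m i ∉ Δ') : ¬ LatAdm {jEq m i} Δ' := by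
  intro hadm
  obtain ⟨d, hdΔ, hdval⟩ := hadm (sigA m i) (by
    rintro e he
    rw [Set.mem_singleton_iff] at he
    subst he
    exact valid_sigA m i)
  obtain ⟨l, hd | hd⟩ := hsub hdΔ
  · -- d = jEq m l
    subst hd
    by_cases hl : l = i
    · exact hmem (hl ▸ hdΔ)
    · have hx : l ∈ (sigA m i l).realize (vA m) := by
        rw [sigA_of_ne m i l hl]
        exact mem_vA.mpr rfl
      have key := valid_le hdval (vA m) hx
      rw [realize_subst, mem_finJoin] at key
      obtain ⟨k, hk⟩ := key
      have hk2 : l ∈ (sigA m i (l.succAbove k)).realize (vA m) := hk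
      by_cases hki : l.succAbove k = i
      · rw [hki, sigA_same] at hk2
        exact hl (mem_vA.mp hk2.1)
      · rw [sigA_of_ne m i _ hki] at hk2
        exact Fin.succAbove_ne l k (mem_vA.mp hk2).symm
  · -- d = mEq m l
    subst hd
    by_cases hl : l = i
    · subst hl
      have hx : l ∈ ((finMeet fun k : Fin (m+1) =>
          LatTerm.var (l.succAbove k)).subst (sigA m l)).realize (vB m) := by
        rw [realize_subst, mem_finMeet]
        intro k
        have : l ∈ (sigA m l (l.succAbove k)).realize (vB m) := by
          rw [sigA_of_ne m l _ (Fin.succAbove_ne l k)]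
          exact mem_vB.mpr (Ne.symm (Fin.succAbove_ne l k))
        exact this
      have key : l ∈ (sigA m l l).realize (vB m) := valid_le hdval (vB m) hx
      rw [sigA_same] at key
      exact (mem_vB.mp key.1) rfl
    · cases m with
      | zero => exact hmem ((mEq_zero i l hl) ▸ hdΔ)
      | succ m' =>
        have hx : l ∈ ((finMeet fun k : Fin (m'+2) =>
            LatTerm.var (l.succAbove k)).subst (sigA (m'+1) i)).realize (vB (m'+1)) := by
          rw [realize_subst, mem_finMeet]
          intro k
          have hgoal : l ∈ (sigA (m'+1) i (l.succAbove k)).realize (vB (m'+1)) := by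
            by_cases hki : l.succAbove k = i
            · rw [hki, sigA_same]
              refine ⟨mem_vB.mpr hl, (mem_finJoin _ _ _).mpr ?_⟩
              by_cases h0 : i.succAbove 0 = l
              · refine ⟨1, ?_⟩
                refine mem_vB.mpr (fun hc => ?_)
                have h01 : (1 : Fin (m'+2)) = 0 :=
                  Fin.succAbove_right_injective (by rw [← hc, h0])
                simp at h01
              · exact ⟨0, mem_vB.mpr (fun hc => h0 hc.symm)⟩
            · rw [sigA_of_ne _ i _ hki]
              exact mem_vB.mpr (Ne.symm (Fin.succAbove_ne l k))
          exact hgoal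
        have key : l ∈ (sigA (m'+1) i l).realize (vB (m'+1)) := valid_le hdval (vB (m'+1)) hx
        rw [sigA_of_ne _ i l hl] at key
        exact (mem_vB.mp key) rfl

lemma caseB (m : ℕ) (Δ' : Set (LatEq (Fin (m+2)))) (hsub : Δ' ⊆ DeltaLat m) (i : Fin (m+2))
    (hmem : mEq m i ∉ Δ') : ¬ LatAdm {mEq m i} Δ' := by
  intro hadm
  obtain ⟨d, hdΔ, hdval⟩ := hadm (sigB m i) (by
    rintro e he
    rw [Set.mem_singleton_iff] at he
    subst he
    exact valid_sigB m i)
  obtain ⟨l, hd | hd⟩ := hsub hdΔ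
  · -- d = jEq m l
    subst hd
    by_cases hl : l = i
    · subst hl
      have hx : l ∈ (sigB m l l).realize (vA m) := by
        rw [sigB_same]
        exact Or.inl (mem_vA.mpr rfl)
      have key := valid_le hdval (vA m) hx
      rw [realize_subst, mem_finJoin] at key
      obtain ⟨k, hk⟩ := key
      have hk2 : l ∈ (sigB m l (l.succAbove k)).realize (vA m) := hk
      rw [sigB_of_ne m l _ (Fin.succAbove_ne l k)] at hk2
      exact Fin.succAbove_ne l k (mem_vA.mp hk2).symm
    · cases m with
      | zero => exact hmem ((jEq_zero i l hl) ▸ hdΔ)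
      | succ m' =>
        have hx : l ∈ (sigB (m'+1) i l).realize (vA (m'+1)) := by
          rw [sigB_of_ne _ i l hl]
          exact mem_vA.mpr rfl
        have key := valid_le hdval (vA (m'+1)) hx
        rw [realize_subst, mem_finJoin] at key
        obtain ⟨k, hk⟩ := key
        have hk2 : l ∈ (sigB (m'+1) i (l.succAbove k)).realize (vA (m'+1)) := hk
        by_cases hki : l.succAbove k = i
        · rw [hki, sigB_same] at hk2
          have hk3 : l ∈ (vA (m'+1)) (i : ℕ) ∨
              l ∈ (finMeet fun k : Fin (m'+2) =>
                LatTerm.var ((i.succAbove k : Fin (m'+3)) : ℕ)).realize (vA (m'+1)) := hk2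
          rcases hk3 with hk3 | hk3
          · exact hl (mem_vA.mp hk3)
          · rw [mem_finMeet] at hk3
            have h0 := mem_vA.mp (hk3 0)
            have h1 := mem_vA.mp (hk3 1)
            have h01 : (0 : Fin (m'+2)) = 1 :=
              Fin.succAbove_right_injective (by rw [← h0, ← h1])
            simp at h01
        · rw [sigB_of_ne _ i _ hki] at hk2
          exact Fin.succAbove_ne l k (mem_vA.mp hk2).symm
  · -- d = mEq m l
    subst hd
    by_cases hl : l = i
    · exact hmem (hl ▸ hdΔ)
    · have hx : l ∈ ((finMeet fun k : Fin (m+1) =>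
          LatTerm.var (l.succAbove k)).subst (sigB m i)).realize (vB m) := by
        rw [realize_subst, mem_finMeet]
        intro k
        have hgoal : l ∈ (sigB m i (l.succAbove k)).realize (vB m) := by
          by_cases hki : l.succAbove k = i
          · rw [hki, sigB_same]
            exact Or.inl (mem_vB.mpr hl)
          · rw [sigB_of_ne m i _ hki]
            exact mem_vB.mpr (Ne.symm (Fin.succAbove_ne l k))
        exact hgoal
      have key : l ∈ (sigB m i l).realize (vB m) := valid_le hdval (vB m) hx
      rw [sigB_of_ne m i l hl] at key
      exact (mem_vB.mp key) rfl

end Stmt5Aux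


theorem stmt5 (m : ℕ) (Δ' : Set (LatEq (Fin (m + 2)))) (h : Δ' ⊂ DeltaLat m) :
    ¬ LatRefuting Δ' := by
  intro href
  obtain ⟨δ, hδmem, hδnot⟩ := Set.exists_of_ssubset h
  obtain ⟨i, hδ | hδ⟩ := hδmem
  · subst hδ
    exact Stmt5Aux.caseA m Δ' h.subset i hδnot
      ((href _).mp (Stmt5Aux.not_valid_jEq m i))
  · subst hδ
    exact Stmt5Aux.caseB m Δ' h.subset i hδnot
      ((href _).mp (Stmt5Aux.not_valid_mEq m i))
end

section
/- (Whitman's condition, admissibility form.) For all lattice terms s_1, s_2, t_1, t_2 over a variable type α: if ⊨_Lat s_1 ⊓ s_2 ≤ t_1 ⊔ t_2, then ⊨_Lat s_1 ≤ t_1 ⊔ t_2, or ⊨_Lat s_2 ≤ t_1 ⊔ t_2, or ⊨_Lat s_1 ⊓ s_2 ≤ t_1, or ⊨_Lat s_1 ⊓ s_2 ≤ t_2. -/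
/-! ### Auxiliary development: Alan Day's interval doubling -/

open scoped Classical

section DayDoubling

variable {M : Type} [Lattice M]

/-- Membership in the interval `[e, f]`. -/
def DayI (e f x : M) : Prop := e ≤ x ∧ x ≤ f

/-- Day's doubling of the interval `[e, f]` in `M`: elements of the interval are doubled
(flag `true` or `false`); elements outside carry flag `false`. -/
def Day (e f : M) : Type := {p : M × Bool // p.2 = true → DayI e f p.1}

namespace Day

variable {e f : M}

noncomputable instance : Lattice (Day e f) where
  le p q := p.1.1 ≤ q.1.1 ∧ (p.1.2 = true → DayI e f q.1.1 → q.1.2 = true)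
  le_refl p := ⟨le_refl _, fun hb _ => hb⟩
  le_trans p q r h₁ h₂ := by
    refine ⟨h₁.1.trans h₂.1, fun hb hIr => ?_⟩
    by_cases hIq : DayI e f q.1.1
    · exact h₂.2 (h₁.2 hb hIq) hIr
    · exact absurd ⟨(p.2 hb).1.trans h₁.1, h₂.1.trans hIr.2⟩ hIq
  le_antisymm p q h₁ h₂ := by
    have hx : p.1.1 = q.1.1 := le_antisymm h₁.1 h₂.1
    have hb : p.1.2 = q.1.2 := by
      cases hp : p.1.2 <;> cases hq : q.1.2
      · rfl
      · exact absurd (h₂.2 hq (by rw [hx]; exact q.2 hq)) (by simp [hp])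
      · exact absurd (h₁.2 hp (by rw [← hx]; exact p.2 hp)) (by simp [hq])
      · rfl
    exact Subtype.ext (Prod.ext hx hb)
  inf p q := ⟨(p.1.1 ⊓ q.1.1,
      if DayI e f (p.1.1 ⊓ q.1.1) then
        ((if DayI e f p.1.1 then p.1.2 else true) &&
         (if DayI e f q.1.1 then q.1.2 else true)) else false),
    by intro hb; simp only at hb; split at hb
       · assumption
       · exact absurd hb (by simp)⟩
  inf_le_left p q := by
    refine ⟨inf_le_left, fun hb hIp => ?_⟩
    simp only [if_pos hIp] at hb
    split at hb
    · rw [Bool.and_eq_true] at hb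
      exact hb.1
    · exact absurd hb (by simp)
  inf_le_right p q := by
    refine ⟨inf_le_right, fun hb hIq => ?_⟩
    simp only [if_pos hIq] at hb
    split at hb
    · rw [Bool.and_eq_true] at hb
      exact hb.2
    · exact absurd hb (by simp)
  le_inf p q r h₁ h₂ := by
    refine ⟨le_inf h₁.1 h₂.1, fun hb hIm => ?_⟩
    simp only
    rw [if_pos hIm, Bool.and_eq_true]
    constructor
    · split
      · next hIq => exact h₁.2 hb hIq
      · rfl
    · split
      · next hIr => exact h₂.2 hb hIr
      · rfl
  sup p q := ⟨(p.1.1 ⊔ q.1.1,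
      if DayI e f (p.1.1 ⊔ q.1.1) then (p.1.2 || q.1.2) else false),
    by intro hb; simp only at hb; split at hb
       · assumption
       · exact absurd hb (by simp)⟩
  le_sup_left p q := by
    refine ⟨le_sup_left, fun hb hIj => ?_⟩
    simp only
    rw [if_pos hIj, Bool.or_eq_true]
    exact Or.inl hb
  le_sup_right p q := by
    refine ⟨le_sup_right, fun hb hIj => ?_⟩
    simp only
    rw [if_pos hIj, Bool.or_eq_true]
    exact Or.inr hb
  sup_le p q r h₁ h₂ := by
    refine ⟨sup_le h₁.1 h₂.1, fun hb hIr => ?_⟩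
    simp only at hb
    split at hb
    · rw [Bool.or_eq_true] at hb
      rcases hb with hb | hb
      · exact h₁.2 hb hIr
      · exact h₂.2 hb hIr
    · exact absurd hb (by simp)

/-- The projection to the base lattice. -/
def proj (p : Day e f) : M := p.1.1

@[simp] lemma proj_inf (p q : Day e f) : proj (p ⊓ q) = proj p ⊓ proj q := rfl
@[simp] lemma proj_sup (p q : Day e f) : proj (p ⊔ q) = proj p ⊔ proj q := rfl

lemma le_def {p q : Day e f} : p ≤ q ↔
    p.1.1 ≤ q.1.1 ∧ (p.1.2 = true → DayI e f q.1.1 → q.1.2 = true) := Iff.rfl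

lemma inf_flag (p q : Day e f) : (p ⊓ q).1.2 =
    if DayI e f (p.1.1 ⊓ q.1.1) then
      ((if DayI e f p.1.1 then p.1.2 else true) &&
       (if DayI e f q.1.1 then q.1.2 else true)) else false := rfl

lemma sup_flag (p q : Day e f) : (p ⊔ q).1.2 =
    if DayI e f (p.1.1 ⊔ q.1.1) then (p.1.2 || q.1.2) else false := rfl

/-- Canonical lift (flag false). -/
def lift (e f : M) (x : M) : Day e f := ⟨(x, false), fun hb => by cases hb⟩

lemma proj_realize {α : Type} (w : α → Day e f) (t : LatTerm α) :
    proj (t.realize w) = t.realize (fun x => proj (w x)) := by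
  induction t with
  | var a => rfl
  | meet s t ihs iht =>
      show proj (s.realize w ⊓ t.realize w) = _
      rw [proj_inf, ihs, iht]; rfl
  | join s t ihs iht =>
      show proj (s.realize w ⊔ t.realize w) = _
      rw [proj_sup, ihs, iht]; rfl

end Day

end DayDoubling

/-! ### Products of valuations -/

lemma realize_prod {α M N : Type} [Lattice M] [Lattice N] (v : α → M) (u : α → N)
    (t : LatTerm α) :
    t.realize (fun x => (v x, u x)) = (t.realize v, t.realize u) := by
  induction t with
  | var a => rfl
  | meet s t ihs iht =>
      show s.realize _ ⊓ t.realize _ = _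
      rw [ihs, iht]; rfl
  | join s t ihs iht =>
      show s.realize _ ⊔ t.realize _ = _
      rw [ihs, iht]; rfl

lemma latValid_leEq_iff {α : Type} (s t : LatTerm α) :
    LatValid (leEq s t) ↔
      ∀ (M : Type) [Lattice M] (v : α → M), s.realize v ≤ t.realize v := by
  constructor
  · intro h M _ v
    have := h M v
    simp only [leEq, LatTerm.realize] at this
    exact le_of_inf_eq this
  · intro h M _ v
    simp only [leEq, LatTerm.realize]
    exact inf_eq_left.mpr (h M v)

theorem stmt7 {α : Type} (s₁ s₂ t₁ t₂ : LatTerm α)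
    (h : LatValid (leEq (s₁.meet s₂) (t₁.join t₂))) :
    LatValid (leEq s₁ (t₁.join t₂)) ∨ LatValid (leEq s₂ (t₁.join t₂)) ∨
      LatValid (leEq (s₁.meet s₂) t₁) ∨ LatValid (leEq (s₁.meet s₂) t₂) := by
  by_contra hc
  push_neg at hc
  obtain ⟨h₁, h₂, h₃, h₄⟩ := hc
  rw [latValid_leEq_iff] at h₁ h₂ h₃ h₄ h
  push_neg at h₁ h₂ h₃ h₄
  obtain ⟨M₁, i₁, v₁, hv₁⟩ := h₁
  obtain ⟨M₂, i₂, v₂, hv₂⟩ := h₂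
  obtain ⟨M₃, i₃, v₃, hv₃⟩ := h₃
  obtain ⟨M₄, i₄, v₄, hv₄⟩ := h₄
  -- combine into one lattice
  let M : Type := M₁ × M₂ × M₃ × M₄
  let v : α → M := fun x => (v₁ x, v₂ x, v₃ x, v₄ x)
  have hreal : ∀ t : LatTerm α,
      t.realize v = (t.realize v₁, t.realize v₂, t.realize v₃, t.realize v₄) := by
    intro t
    show t.realize (fun x => (v₁ x, (fun y => (v₂ y, v₃ y, v₄ y)) x)) = _
    rw [realize_prod]
    congr 1
    rw [show (fun y => (v₂ y, v₃ y, v₄ y)) = (fun y => (v₂ y, (fun z => (v₃ z, v₄ z)) y)) from rfl,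
      realize_prod, realize_prod]
  -- abbreviations in the product lattice
  have hef : (s₁.meet s₂).realize v ≤ (t₁.join t₂).realize v := h M v
  -- failures transfer to the product lattice
  have key : ∀ (s t : LatTerm α), ¬ s.realize v₁ ≤ t.realize v₁ →
      ¬ s.realize v ≤ t.realize v := by
    intro s t hn hle
    rw [hreal s, hreal t, Prod.mk_le_mk] at hle
    exact hn hle.1
  have key₂ : ∀ (s t : LatTerm α), ¬ s.realize v₂ ≤ t.realize v₂ →
      ¬ s.realize v ≤ t.realize v := by
    intro s t hn hle
    rw [hreal s, hreal t, Prod.mk_le_mk, Prod.mk_le_mk] at hle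
    exact hn hle.2.1
  have key₃ : ∀ (s t : LatTerm α), ¬ s.realize v₃ ≤ t.realize v₃ →
      ¬ s.realize v ≤ t.realize v := by
    intro s t hn hle
    rw [hreal s, hreal t, Prod.mk_le_mk, Prod.mk_le_mk, Prod.mk_le_mk] at hle
    exact hn hle.2.2.1
  have key₄ : ∀ (s t : LatTerm α), ¬ s.realize v₄ ≤ t.realize v₄ →
      ¬ s.realize v ≤ t.realize v := by
    intro s t hn hle
    rw [hreal s, hreal t, Prod.mk_le_mk, Prod.mk_le_mk, Prod.mk_le_mk] at hle
    exact hn hle.2.2.2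
  have hnA : ¬ s₁.realize v ≤ (t₁.join t₂).realize v := key _ _ hv₁
  have hnB : ¬ s₂.realize v ≤ (t₁.join t₂).realize v := key₂ _ _ hv₂
  have hnC : ¬ (s₁.meet s₂).realize v ≤ t₁.realize v := key₃ _ _ hv₃
  have hnD : ¬ (s₁.meet s₂).realize v ≤ t₂.realize v := key₄ _ _ hv₄
  -- pass to the doubled lattice
  set e := (s₁.meet s₂).realize v with he
  set F := (t₁.join t₂).realize v with hF
  let w : α → Day e F := fun x => Day.lift e F (v x)
  have hproj : ∀ t : LatTerm α, Day.proj (t.realize w) = t.realize v := by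
    intro t
    rw [Day.proj_realize]
    rfl
  have hPQ : (s₁.meet s₂).realize w ≤ (t₁.join t₂).realize w := h (Day e F) w
  -- flags of realizations of t₁, t₂ are false
  have hQ₁ : (t₁.realize w).1.2 = false := by
    by_contra hb
    rw [Bool.not_eq_false] at hb
    have := (t₁.realize w).2 hb
    rw [show (t₁.realize w).1.1 = Day.proj (t₁.realize w) from rfl, hproj] at this
    exact hnC this.1
  have hQ₂ : (t₂.realize w).1.2 = false := by
    by_contra hb
    rw [Bool.not_eq_false] at hb
    have := (t₂.realize w).2 hb
    rw [show (t₂.realize w).1.1 = Day.proj (t₂.realize w) from rfl, hproj] at this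
    exact hnD this.1
  -- the flag of the realization of s₁ ⊓ s₂ is true
  have hmeet : (s₁.meet s₂).realize w = s₁.realize w ⊓ s₂.realize w := rfl
  have hjoin : (t₁.join t₂).realize w = t₁.realize w ⊔ t₂.realize w := rfl
  have hprojP : (s₁.realize w).1.1 ⊓ (s₂.realize w).1.1 = e := by
    have := hproj (s₁.meet s₂)
    rw [hmeet, Day.proj_inf] at this
    exact this
  have hprojQ : (t₁.realize w).1.1 ⊔ (t₂.realize w).1.1 = F := by
    have := hproj (t₁.join t₂)
    rw [hjoin, Day.proj_sup] at this
    exact this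
  have hefM : e ≤ F := hef
  have hIe : DayI e F e := ⟨le_refl _, hefM⟩
  have hIF : DayI e F F := ⟨hefM, le_refl _⟩
  have hPflag : ((s₁.meet s₂).realize w).1.2 = true := by
    rw [hmeet, Day.inf_flag, hprojP, if_pos hIe]
    have h1 : ¬ DayI e F (s₁.realize w).1.1 := by
      rw [show (s₁.realize w).1.1 = Day.proj (s₁.realize w) from rfl, hproj]
      intro hI
      exact hnA hI.2
    have h2 : ¬ DayI e F (s₂.realize w).1.1 := by
      rw [show (s₂.realize w).1.1 = Day.proj (s₂.realize w) from rfl, hproj]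
      intro hI
      exact hnB hI.2
    rw [if_neg h1, if_neg h2]
    rfl
  have hQflag : ((t₁.join t₂).realize w).1.2 = false := by
    rw [hjoin, Day.sup_flag, hQ₁, hQ₂]
    simp
  have hIQ : DayI e F ((t₁.join t₂).realize w).1.1 := by
    rw [show ((t₁.join t₂).realize w).1.1 = Day.proj ((t₁.join t₂).realize w) from rfl,
      hproj, ← hF]
    exact hIF
  have := (Day.le_def.mp hPQ).2 hPflag hIQ
  rw [hQflag] at this
  exact absurd this (by simp)
end

section
/- (Join-irreducibility of generators.) Let α be a variable type, x ∈ α, and let t_1, t_2 be lattice terms over α. If ⊨_Lat x ≤ t_1 ⊔ t_2 (where x denotes the variable x viewed as a lattice term), then ⊨_Lat x ≤ t_1 or ⊨_Lat x ≤ t_2. -/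
private lemma aux_sound {α : Type} (x : α) :
    ∀ t : LatTerm α, t.realize (fun y => (y = x : Prop)) →
      ∀ (M : Type) [Lattice M] (v : α → M), v x ≤ t.realize v := by
  intro t
  induction t with
  | var a => intro hp M _ v; simp [LatTerm.realize] at hp ⊢; subst hp; rfl
  | meet s t ihs iht =>
      intro hp M _ v
      simp only [LatTerm.realize] at hp ⊢
      exact le_inf (ihs hp.1 M v) (iht hp.2 M v)
  | join s t ihs iht =>
      intro hp M _ v
      simp only [LatTerm.realize] at hp ⊢
      rcases hp with hp | hp
      · exact le_sup_of_le_left (ihs hp M v)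
      · exact le_sup_of_le_right (iht hp M v)

theorem stmt8 {α : Type} (x : α) (t₁ t₂ : LatTerm α)
    (h : LatValid (leEq (.var x) (t₁.join t₂))) :
    LatValid (leEq (.var x) t₁) ∨ LatValid (leEq (.var x) t₂) := by
  have hprop := h Prop (fun y => (y = x : Prop))
  simp only [leEq, LatTerm.realize] at hprop
  have hx : t₁.realize (fun y => (y = x : Prop)) ∨ t₂.realize (fun y => (y = x : Prop)) := by
    have h2 := inf_eq_left.mp hprop
    simpa [LatTerm.realize, sup_Prop_eq] using h2 trivial
  rcases hx with hp | hp
  · left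
    intro M _ v
    simp only [leEq, LatTerm.realize]
    exact inf_eq_left.mpr (aux_sound x t₁ hp M v)
  · right
    intro M _ v
    simp only [leEq, LatTerm.realize]
    exact inf_eq_left.mpr (aux_sound x t₂ hp M v)
end

section
/- (Meet-irreducibility of generators.) Let α be a variable type, x ∈ α, and let s_1, s_2 be lattice terms over α. If ⊨_Lat s_1 ⊓ s_2 ≤ x (where x denotes the variable x viewed as a lattice term), then ⊨_Lat s_1 ≤ x or ⊨_Lat s_2 ≤ x. -/
lemma key_le_var {α : Type} (x : α) (s : LatTerm α)
    (hs : ¬ s.realize (fun a : α => (a ≠ x : Prop))) :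
    LatValid (leEq s (.var x)) := by
  intro M _ v
  show (s.realize v) ⊓ v x = s.realize v
  rw [inf_eq_left]
  induction s with
  | var a =>
    simp only [LatTerm.realize, ne_eq, not_not] at hs ⊢
    subst hs; rfl
  | meet s t ihs iht =>
    simp only [LatTerm.realize] at hs ⊢
    rcases not_and_or.mp hs with h' | h'
    · exact le_trans inf_le_left (ihs h')
    · exact le_trans inf_le_right (iht h')
  | join s t ihs iht =>
    simp only [LatTerm.realize] at hs ⊢
    exact sup_le (ihs fun h' => hs (Or.inl h')) (iht fun h' => hs (Or.inr h'))

theorem stmt9 {α : Type} (x : α) (s₁ s₂ : LatTerm α)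
    (h : LatValid (leEq (s₁.meet s₂) (.var x))) :
    LatValid (leEq s₁ (.var x)) ∨ LatValid (leEq s₂ (.var x)) := by
  have hm := h Prop (fun a : α => (a ≠ x : Prop))
  have : ¬ ((s₁.meet s₂).realize (fun a : α => (a ≠ x : Prop))) := by
    intro hr
    have : (s₁.meet s₂).realize (fun a : α => (a ≠ x : Prop)) ≤ (x ≠ x : Prop) := by
      rw [← inf_eq_left]; exact hm
    exact this hr rfl
  simp only [LatTerm.realize] at this
  rcases not_and_or.mp this with h' | h'
  · exact Or.inl (key_le_var x s₁ h')
  · exact Or.inr (key_le_var x s₂ h')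
end

section
/- For every n ≥ 2, no proper subset of Δ_n^{DL} := { ⊓_{i ∈ I} y_i ≤ ⊔_{j ∈ Fin n \ I} y_j : I a nonempty proper subset of Fin n } is DLat-refuting for the variables of Fin n; that is, Δ_n^{DL} is a minimal DLat-refuting set. -/
/-- DLat-validity: equal realizations in every distributive lattice under every valuation. -/
def DLatValid {α : Type} (e : LatEq α) : Prop :=
  ∀ (M : Type) [DistribLattice M] (v : α → M), e.1.realize v = e.2.realize v

/-- `Γ ⊢~_DLat Δ`. -/
def DLatAdm {n : ℕ} (Γ Δ : Set (LatEq (Fin n))) : Prop :=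
  ∀ σ : Fin n → LatTerm ℕ,
    (∀ e ∈ Γ, DLatValid (e.1.subst σ, e.2.subst σ)) →
      ∃ d ∈ Δ, DLatValid (d.1.subst σ, d.2.subst σ)

/-- `Δ` is DLat-refuting for the variables of `Fin n`. -/
def DLatRefuting {n : ℕ} (Δ : Set (LatEq (Fin n))) : Prop :=
  ∀ e : LatEq (Fin n), ¬ DLatValid e ↔ DLatAdm {e} Δ

/-- The join, with a fixed bracketing, of a nonempty list of lattice terms. -/
def joinListNE {α : Type} : (l : List (LatTerm α)) → l ≠ [] → LatTerm α
  | [], h => absurd rfl h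
  | a :: l, _ => l.foldl LatTerm.join a

/-- The meet, with a fixed bracketing, of a nonempty list of lattice terms. -/
def meetListNE {α : Type} : (l : List (LatTerm α)) → l ≠ [] → LatTerm α
  | [], h => absurd rfl h
  | a :: l, _ => l.foldl LatTerm.meet a

/-- The join, with a fixed bracketing and order, of `f i` for `i` in a nonempty finset `s`. -/
noncomputable def finsetJoin {γ α : Type} (s : Finset γ) (hs : s.Nonempty)
    (f : γ → LatTerm α) : LatTerm α :=
  joinListNE (s.toList.map f)
    (by simp only [ne_eq, List.map_eq_nil_iff, Finset.toList_eq_nil]; exact hs.ne_empty)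

/-- The meet, with a fixed bracketing and order, of `f i` for `i` in a nonempty finset `s`. -/
noncomputable def finsetMeet {γ α : Type} (s : Finset γ) (hs : s.Nonempty)
    (f : γ → LatTerm α) : LatTerm α :=
  meetListNE (s.toList.map f)
    (by simp only [ne_eq, List.map_eq_nil_iff, Finset.toList_eq_nil]; exact hs.ne_empty)

/-- The set `Δ_n^{DL}` (for `n = m + 2`) of equations
`⊓_{i ∈ I} y_i ≤ ⊔_{j ∈ Fin n \ I} y_j` for `I` a nonempty proper subset of `Fin n`
(properness being recorded by the nonemptiness of the complement of `I`). -/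
def DeltaDL (m : ℕ) : Set (LatEq (Fin (m + 2))) :=
  { e | ∃ (I : Finset (Fin (m + 2))) (hI : I.Nonempty) (_ : I ≠ Finset.univ)
          (hc : Iᶜ.Nonempty),
      e = leEq (finsetMeet I hI LatTerm.var) (finsetJoin Iᶜ hc LatTerm.var) }

section StmtElevenAux

variable {α β γ M : Type} [Lattice M]

private lemma foldl_inf_le' : ∀ (l : List M) (a x : M), x ∈ a :: l → l.foldl (· ⊓ ·) a ≤ x
  | [], a, x, hx => by simp at hx; simp [hx]
  | b :: l, a, x, hx => by
    rw [List.foldl_cons]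
    rcases List.mem_cons.mp hx with rfl | hx
    · exact (foldl_inf_le' l (x ⊓ b) _ (List.mem_cons_self)).trans inf_le_left
    · rcases List.mem_cons.mp hx with rfl | hx
      · exact (foldl_inf_le' l (a ⊓ x) _ (List.mem_cons_self)).trans inf_le_right
      · exact foldl_inf_le' l (a ⊓ b) x (List.mem_cons_of_mem _ hx)

private lemma le_foldl_inf' : ∀ (l : List M) (a c : M), (∀ x ∈ a :: l, c ≤ x) →
    c ≤ l.foldl (· ⊓ ·) a
  | [], a, c, h => h a (List.mem_cons_self)
  | b :: l, a, c, h => by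
    rw [List.foldl_cons]
    exact le_foldl_inf' l _ c fun x hx => by
      rcases List.mem_cons.mp hx with rfl | hx
      · exact le_inf (h a (List.mem_cons_self))
          (h b (List.mem_cons_of_mem _ (List.mem_cons_self)))
      · exact h x (List.mem_cons_of_mem _ (List.mem_cons_of_mem _ hx))

private lemma le_foldl_sup' : ∀ (l : List M) (a x : M), x ∈ a :: l → x ≤ l.foldl (· ⊔ ·) a
  | [], a, x, hx => by simp at hx; simp [hx]
  | b :: l, a, x, hx => by
    rw [List.foldl_cons]
    rcases List.mem_cons.mp hx with rfl | hx
    · exact le_sup_left.trans (le_foldl_sup' l (x ⊔ b) _ (List.mem_cons_self))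
    · rcases List.mem_cons.mp hx with rfl | hx
      · exact le_sup_right.trans (le_foldl_sup' l (a ⊔ x) _ (List.mem_cons_self))
      · exact le_foldl_sup' l (a ⊔ b) x (List.mem_cons_of_mem _ hx)

private lemma foldl_sup_le' : ∀ (l : List M) (a c : M), (∀ x ∈ a :: l, x ≤ c) →
    l.foldl (· ⊔ ·) a ≤ c
  | [], a, c, h => h a (List.mem_cons_self)
  | b :: l, a, c, h => by
    rw [List.foldl_cons]
    exact foldl_sup_le' l _ c fun x hx => by
      rcases List.mem_cons.mp hx with rfl | hx
      · exact sup_le (h a (List.mem_cons_self))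
          (h b (List.mem_cons_of_mem _ (List.mem_cons_self)))
      · exact h x (List.mem_cons_of_mem _ (List.mem_cons_of_mem _ hx))

private lemma realize_foldl_meet (v : α → M) : ∀ (l : List (LatTerm α)) (a : LatTerm α),
    (l.foldl LatTerm.meet a).realize v = (l.map (LatTerm.realize v)).foldl (· ⊓ ·) (a.realize v)
  | [], _ => rfl
  | b :: l, a => by
    rw [List.foldl_cons, realize_foldl_meet v l, List.map_cons, List.foldl_cons]; rfl

private lemma realize_foldl_join (v : α → M) : ∀ (l : List (LatTerm α)) (a : LatTerm α),
    (l.foldl LatTerm.join a).realize v = (l.map (LatTerm.realize v)).foldl (· ⊔ ·) (a.realize v)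
  | [], _ => rfl
  | b :: l, a => by
    rw [List.foldl_cons, realize_foldl_join v l, List.map_cons, List.foldl_cons]; rfl

private lemma subst_foldl_meet (σ : α → LatTerm β) : ∀ (l : List (LatTerm α)) (a : LatTerm α),
    (l.foldl LatTerm.meet a).subst σ = (l.map (LatTerm.subst σ)).foldl LatTerm.meet (a.subst σ)
  | [], _ => rfl
  | b :: l, a => by
    rw [List.foldl_cons, subst_foldl_meet σ l, List.map_cons, List.foldl_cons]; rfl

private lemma subst_foldl_join (σ : α → LatTerm β) : ∀ (l : List (LatTerm α)) (a : LatTerm α),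
    (l.foldl LatTerm.join a).subst σ = (l.map (LatTerm.subst σ)).foldl LatTerm.join (a.subst σ)
  | [], _ => rfl
  | b :: l, a => by
    rw [List.foldl_cons, subst_foldl_join σ l, List.map_cons, List.foldl_cons]; rfl

private lemma realize_meetListNE_le (v : α → M) : ∀ (l : List (LatTerm α)) (h : l ≠ [])
    (x : LatTerm α), x ∈ l → (meetListNE l h).realize v ≤ x.realize v
  | a :: l, _, x, hx => by
    show (l.foldl LatTerm.meet a).realize v ≤ _
    rw [realize_foldl_meet]
    apply foldl_inf_le'
    rcases List.mem_cons.mp hx with rfl | hx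
    · exact List.mem_cons_self
    · exact List.mem_cons_of_mem _ (List.mem_map_of_mem hx)

private lemma le_realize_meetListNE (v : α → M) : ∀ (l : List (LatTerm α)) (h : l ≠ []) (c : M),
    (∀ x ∈ l, c ≤ x.realize v) → c ≤ (meetListNE l h).realize v
  | a :: l, _, c, hc => by
    show c ≤ (l.foldl LatTerm.meet a).realize v
    rw [realize_foldl_meet]
    apply le_foldl_inf'
    intro x hx
    rcases List.mem_cons.mp hx with rfl | hx
    · exact hc a (List.mem_cons_self)
    · obtain ⟨t, ht, rfl⟩ := List.mem_map.mp hx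
      exact hc t (List.mem_cons_of_mem _ ht)

private lemma le_realize_joinListNE (v : α → M) : ∀ (l : List (LatTerm α)) (h : l ≠ [])
    (x : LatTerm α), x ∈ l → x.realize v ≤ (joinListNE l h).realize v
  | a :: l, _, x, hx => by
    show _ ≤ (l.foldl LatTerm.join a).realize v
    rw [realize_foldl_join]
    apply le_foldl_sup'
    rcases List.mem_cons.mp hx with rfl | hx
    · exact List.mem_cons_self
    · exact List.mem_cons_of_mem _ (List.mem_map_of_mem hx)

private lemma realize_joinListNE_le (v : α → M) : ∀ (l : List (LatTerm α)) (h : l ≠ []) (c : M),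
    (∀ x ∈ l, x.realize v ≤ c) → (joinListNE l h).realize v ≤ c
  | a :: l, _, c, hc => by
    show (l.foldl LatTerm.join a).realize v ≤ c
    rw [realize_foldl_join]
    apply foldl_sup_le'
    intro x hx
    rcases List.mem_cons.mp hx with rfl | hx
    · exact hc a (List.mem_cons_self)
    · obtain ⟨t, ht, rfl⟩ := List.mem_map.mp hx
      exact hc t (List.mem_cons_of_mem _ ht)

private lemma meetListNE_eq_of_list_eq : ∀ {l1 l2 : List (LatTerm α)} (_ : l1 = l2)
    (h1 : l1 ≠ []) (h2 : l2 ≠ []), meetListNE l1 h1 = meetListNE l2 h2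
  | _, _, rfl, _, _ => rfl

private lemma joinListNE_eq_of_list_eq : ∀ {l1 l2 : List (LatTerm α)} (_ : l1 = l2)
    (h1 : l1 ≠ []) (h2 : l2 ≠ []), joinListNE l1 h1 = joinListNE l2 h2
  | _, _, rfl, _, _ => rfl

private lemma subst_meetListNE (σ : α → LatTerm β) : ∀ (l : List (LatTerm α)) (h : l ≠ [])
    (h2 : l.map (LatTerm.subst σ) ≠ []),
    (meetListNE l h).subst σ = meetListNE (l.map (LatTerm.subst σ)) h2
  | a :: l, _, _ => subst_foldl_meet σ l a

private lemma subst_joinListNE (σ : α → LatTerm β) : ∀ (l : List (LatTerm α)) (h : l ≠ [])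
    (h2 : l.map (LatTerm.subst σ) ≠ []),
    (joinListNE l h).subst σ = joinListNE (l.map (LatTerm.subst σ)) h2
  | a :: l, _, _ => subst_foldl_join σ l a

-- Finset-level interface

private lemma realize_finsetMeet_le (v : α → M) (s : Finset γ) (hs : s.Nonempty)
    (f : γ → LatTerm α) {k : γ} (hk : k ∈ s) :
    (finsetMeet s hs f).realize v ≤ (f k).realize v :=
  realize_meetListNE_le v _ _ _ (List.mem_map_of_mem (f := f) (Finset.mem_toList.mpr hk))

private lemma le_realize_finsetMeet (v : α → M) (s : Finset γ) (hs : s.Nonempty)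
    (f : γ → LatTerm α) {c : M} (hc : ∀ k ∈ s, c ≤ (f k).realize v) :
    c ≤ (finsetMeet s hs f).realize v := by
  apply le_realize_meetListNE
  intro x hx
  obtain ⟨k, hk, rfl⟩ := List.mem_map.mp hx
  exact hc k (Finset.mem_toList.mp hk)

private lemma le_realize_finsetJoin (v : α → M) (s : Finset γ) (hs : s.Nonempty)
    (f : γ → LatTerm α) {k : γ} (hk : k ∈ s) :
    (f k).realize v ≤ (finsetJoin s hs f).realize v :=
  le_realize_joinListNE v _ _ _ (List.mem_map_of_mem (f := f) (Finset.mem_toList.mpr hk))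

private lemma realize_finsetJoin_le (v : α → M) (s : Finset γ) (hs : s.Nonempty)
    (f : γ → LatTerm α) {c : M} (hc : ∀ k ∈ s, (f k).realize v ≤ c) :
    (finsetJoin s hs f).realize v ≤ c := by
  apply realize_joinListNE_le
  intro x hx
  obtain ⟨k, hk, rfl⟩ := List.mem_map.mp hx
  exact hc k (Finset.mem_toList.mp hk)

private lemma subst_finsetMeet (σ : α → LatTerm β) (s : Finset γ) (hs : s.Nonempty)
    (f : γ → LatTerm α) :
    (finsetMeet s hs f).subst σ = finsetMeet s hs (fun k => (f k).subst σ) := by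
  refine (subst_meetListNE σ _ _ ?_).trans (meetListNE_eq_of_list_eq ?_ _ _)
  · simp [hs.ne_empty]
  · rw [List.map_map]; rfl

private lemma subst_finsetJoin (σ : α → LatTerm β) (s : Finset γ) (hs : s.Nonempty)
    (f : γ → LatTerm α) :
    (finsetJoin s hs f).subst σ = finsetJoin s hs (fun k => (f k).subst σ) := by
  refine (subst_joinListNE σ _ _ ?_).trans (joinListNE_eq_of_list_eq ?_ _ _)
  · simp [hs.ne_empty]
  · rw [List.map_map]; rfl

/-- If a Boolean valuation realizes `f k` as `true` exactly on `J`, then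
`⊓_J f ≤ ⊔_{Jᶜ} f` is not DLat-valid. -/
private lemma refute_core {n : ℕ} (J : Finset (Fin n)) (hJ : J.Nonempty) (hc : Jᶜ.Nonempty)
    (f : Fin n → LatTerm α) (v : α → Bool)
    (hv : ∀ k, ((f k).realize v = true) ↔ k ∈ J) :
    ¬ DLatValid (leEq (finsetMeet J hJ f) (finsetJoin Jᶜ hc f)) := by
  intro hval
  have h := hval Bool v
  simp only [leEq, LatTerm.realize] at h
  have hA : (finsetMeet J hJ f).realize v = true :=
    top_le_iff.mp (le_realize_finsetMeet v J hJ f fun k hk => ((hv k).mpr hk).ge)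
  have hB : (finsetJoin Jᶜ hc f).realize v = false := by
    apply le_bot_iff.mp
    apply realize_finsetJoin_le v _ hc f
    intro k hk
    have hkJ : k ∉ J := Finset.mem_compl.mp hk
    cases hb : (f k).realize v
    · exact le_rfl
    · exact absurd ((hv k).mp hb) hkJ
  rw [hA, hB] at h
  simp at h

end StmtElevenAux

theorem stmt11 (m : ℕ) (Δ' : Set (LatEq (Fin (m + 2)))) (h : Δ' ⊂ DeltaDL m) :
    ¬ DLatRefuting Δ' := by
  intro hr
  obtain ⟨δ, hδmem, hδnot⟩ := Set.exists_of_ssubset h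
  obtain ⟨I, hI, hIne, hIc, rfl⟩ := hδmem
  -- the missing equation is not DLat-valid
  have hnv : ¬ DLatValid (leEq (finsetMeet I hI LatTerm.var) (finsetJoin Iᶜ hIc LatTerm.var)) := by
    apply refute_core I hI hIc LatTerm.var (fun k => decide (k ∈ I))
    intro k
    simp [LatTerm.realize]
  have hadm := (hr _).mp hnv
  -- the substitution
  set P : LatTerm ℕ := finsetMeet I hI (fun i => LatTerm.var (i : ℕ)) with hP
  set S : LatTerm ℕ := finsetJoin Iᶜ hIc (fun j => LatTerm.var (j : ℕ)) with hS
  set σ : Fin (m + 2) → LatTerm ℕ := fun k =>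
    if k ∈ I then (LatTerm.var (k : ℕ)).meet ((LatTerm.var (m + 2)).join S)
    else (LatTerm.var (k : ℕ)).join ((LatTerm.var (m + 2)).meet P) with hσ
  have hσI : ∀ k ∈ I, σ k = (LatTerm.var (k : ℕ)).meet ((LatTerm.var (m + 2)).join S) := by
    intro k hk; simp [hσ, hk]
  have hσnI : ∀ k ∉ I, σ k = (LatTerm.var (k : ℕ)).join ((LatTerm.var (m + 2)).meet P) := by
    intro k hk; simp [hσ, hk]
  -- substituted instance of the missing equation is valid
  have hvalσ : ∀ e ∈ ({leEq (finsetMeet I hI LatTerm.var) (finsetJoin Iᶜ hIc LatTerm.var)} :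
      Set (LatEq (Fin (m + 2)))), DLatValid (e.1.subst σ, e.2.subst σ) := by
    rintro e rfl
    intro M _ v
    simp only [leEq, LatTerm.subst, LatTerm.realize]
    rw [subst_finsetMeet, subst_finsetJoin]
    apply inf_eq_left.mpr
    set L := (finsetMeet I hI fun k => (LatTerm.var k).subst σ).realize v with hL
    set R := (finsetJoin Iᶜ hIc fun k => (LatTerm.var k).subst σ).realize v with hR
    have hg : ∀ k : Fin (m + 2), ((LatTerm.var k).subst σ).realize v = (σ k).realize v := fun _ => rfl
    set Pv := P.realize v with hPv
    set Sv := S.realize v with hSv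
    set Wv := v (m + 2) with hWv
    have hgI : ∀ k ∈ I, (σ k).realize v = v (k : ℕ) ⊓ (Wv ⊔ Sv) := by
      intro k hk; rw [hσI k hk]; rfl
    have hgnI : ∀ k ∉ I, (σ k).realize v = v (k : ℕ) ⊔ (Wv ⊓ Pv) := by
      intro k hk; rw [hσnI k hk]; rfl
    have h1 : L ≤ Pv := by
      rw [hPv, hP]
      apply le_realize_finsetMeet
      intro k hk
      have : L ≤ (σ k).realize v := realize_finsetMeet_le v I hI _ hk
      rw [hgI k hk] at this
      exact this.trans inf_le_left
    have h2 : L ≤ Wv ⊔ Sv := by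
      obtain ⟨a, ha⟩ := id hI
      have : L ≤ (σ a).realize v := realize_finsetMeet_le v I hI _ ha
      rw [hgI a ha] at this
      exact this.trans inf_le_right
    have h3 : Wv ⊓ Pv ≤ R := by
      obtain ⟨b, hb⟩ := id hIc
      have : (σ b).realize v ≤ R := le_realize_finsetJoin v Iᶜ hIc _ hb
      rw [hgnI b (Finset.mem_compl.mp hb)] at this
      exact le_sup_right.trans this
    have h4 : Sv ≤ R := by
      rw [hSv, hS]
      apply realize_finsetJoin_le
      intro k hk
      have : (σ k).realize v ≤ R := le_realize_finsetJoin v Iᶜ hIc _ hk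
      rw [hgnI k (Finset.mem_compl.mp hk)] at this
      exact le_sup_left.trans this
    calc L ≤ Pv ⊓ (Wv ⊔ Sv) := le_inf h1 h2
      _ = Pv ⊓ Wv ⊔ Pv ⊓ Sv := inf_sup_left _ _ _
      _ ≤ R := sup_le ((inf_comm Pv Wv).le.trans h3) (inf_le_right.trans h4)
  obtain ⟨d, hd', hdval⟩ := hadm σ hvalσ
  obtain ⟨J, hJ, hJne, hJc, rfl⟩ := h.1 hd'
  -- if J = I we contradict δ ∉ Δ'
  by_cases hJI : J = I
  · subst hJI
    exact hδnot hd'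
  -- otherwise we refute the substituted J-equation with a Boolean valuation
  have hdval' : DLatValid (leEq (finsetMeet J hJ σ) (finsetJoin Jᶜ hJc σ)) := by
    have e1 : (finsetMeet J hJ LatTerm.var).subst σ = finsetMeet J hJ σ :=
      subst_finsetMeet σ J hJ LatTerm.var
    have e2 : (finsetJoin Jᶜ hJc LatTerm.var).subst σ = finsetJoin Jᶜ hJc σ :=
      subst_finsetJoin σ Jᶜ hJc LatTerm.var
    simpa only [leEq, LatTerm.subst, e1, e2] using hdval
  by_cases hsub : J ⊆ I
  · -- J ⊊ I : use valuation with w = true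
    obtain ⟨i0, hi0I, hi0J⟩ :=
      Finset.not_subset.mp (fun hsub2 => hJI (Finset.Subset.antisymm hsub hsub2))
    set v : ℕ → Bool := fun x => if h : x < m + 2 then decide ((⟨x, h⟩ : Fin (m + 2)) ∈ J) else true
      with hv
    have hvk : ∀ k : Fin (m + 2), v (k : ℕ) = decide (k ∈ J) := by
      intro k; simp [hv]
    have hW : v (m + 2) = true := by simp [hv]
    have hPv : P.realize v = false := by
      apply le_bot_iff.mp
      have := realize_finsetMeet_le v I hI (fun i => LatTerm.var (i : ℕ)) hi0I
      rw [hP]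
      refine this.trans ?_
      show v (i0 : ℕ) ≤ false
      rw [hvk]
      simp [hi0J]
    refine refute_core J hJ hJc σ v ?_ hdval'
    intro k
    by_cases hk : k ∈ I
    · rw [hσI k hk]
      show (v (k : ℕ) ⊓ (v (m + 2) ⊔ S.realize v) = true) ↔ k ∈ J
      rw [hvk, hW]
      simp
    · rw [hσnI k hk]
      show (v (k : ℕ) ⊔ (v (m + 2) ⊓ P.realize v) = true) ↔ k ∈ J
      rw [hvk, hW, hPv]
      simp
  · -- ¬ J ⊆ I : use valuation with w = false
    obtain ⟨j0, hj0J, hj0I⟩ := Finset.not_subset.mp hsub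
    set v : ℕ → Bool := fun x => if h : x < m + 2 then decide ((⟨x, h⟩ : Fin (m + 2)) ∈ J) else false
      with hv
    have hvk : ∀ k : Fin (m + 2), v (k : ℕ) = decide (k ∈ J) := by
      intro k; simp [hv]
    have hW : v (m + 2) = false := by simp [hv]
    have hSv : S.realize v = true := by
      apply top_le_iff.mp
      have := le_realize_finsetJoin v Iᶜ hIc (fun j => LatTerm.var (j : ℕ))
        (Finset.mem_compl.mpr hj0I)
      rw [hS]
      refine le_trans ?_ this
      show true ≤ v (j0 : ℕ)
      rw [hvk]
      simp [hj0J]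
    refine refute_core J hJ hJc σ v ?_ hdval'
    intro k
    by_cases hk : k ∈ I
    · rw [hσI k hk]
      show (v (k : ℕ) ⊓ (v (m + 2) ⊔ S.realize v) = true) ↔ k ∈ J
      rw [hvk, hW, hSv]
      simp
    · rw [hσnI k hk]
      show (v (k : ℕ) ⊔ (v (m + 2) ⊓ P.realize v) = true) ↔ k ∈ J
      rw [hvk, hW]
      simp
end

section
/- Let n ≥ 2 and let t_1, …, t_n be lattice terms over a variable type β. Then t_1, …, t_n are DLat-dependent if and only if there exists a nonempty proper subset I of Fin n such that ⊨_DLat ⊓_{i ∈ I} t_i ≤ ⊔_{j ∈ Fin n \ I} t_j, where ⊓ and ⊔ denote the meet, respectively join, with some fixed bracketing, of the indicated terms. -/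
/-- `t 0, …, t (n-1)` are DLat-dependent: some equation `e` over `Fin n` satisfies
`⊨_DLat e(t 0, …, t (n-1))` but not `⊨_DLat e`. -/
def DLatDependent {β : Type} {n : ℕ} (t : Fin n → LatTerm β) : Prop :=
  ∃ e : LatEq (Fin n), DLatValid (e.1.subst t, e.2.subst t) ∧ ¬ DLatValid e

namespace AuxDL

open LatTerm

def dnf {α : Type} [DecidableEq α] : LatTerm α → Finset (Finset α)
  | .var a => {{a}}
  | .meet s t => (dnf s ×ˢ dnf t).image fun p => p.1 ∪ p.2
  | .join s t => dnf s ∪ dnf t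

theorem realize_eq_sup {α M : Type} [DecidableEq α] [DistribLattice M] [BoundedOrder M]
    (v : α → M) : ∀ s : LatTerm α, s.realize v = (dnf s).sup fun A => A.inf v
  | .var a => by simp [dnf, realize]
  | .meet s t => by
    rw [show (LatTerm.meet s t).realize v = s.realize v ⊓ t.realize v from rfl,
      realize_eq_sup v s, realize_eq_sup v t, Finset.sup_inf_sup, dnf, Finset.sup_image]
    refine Finset.sup_congr rfl fun p _ => ?_
    simp [Function.comp, Finset.inf_union]
  | .join s t => by
    rw [show (LatTerm.join s t).realize v = s.realize v ⊔ t.realize v from rfl,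
      realize_eq_sup v s, realize_eq_sup v t, dnf, Finset.sup_union]

theorem bool_sup_iff {γ : Type} (X : Finset γ) (f : γ → Bool) :
    X.sup f = true ↔ ∃ A ∈ X, f A = true := by
  constructor
  · intro h
    by_contra hc
    push_neg at hc
    have : X.sup f = (⊥ : Bool) := (Finset.sup_eq_bot_iff f X).2 fun A hA => by
      simpa using hc A hA
    rw [this] at h
    exact absurd h (by simp)
  · rintro ⟨A, hA, hfa⟩
    refine le_antisymm (by simp) ?_
    have := Finset.le_sup (f := f) hA
    rwa [hfa] at this

theorem bool_inf_iff {γ : Type} (X : Finset γ) (f : γ → Bool) :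
    X.inf f = true ↔ ∀ A ∈ X, f A = true := by
  have := Finset.inf_eq_top_iff f X
  simpa using this

theorem realize_bool_iff {α : Type} [DecidableEq α] (w : α → Bool) (s : LatTerm α) :
    s.realize w = true ↔ ∃ A ∈ dnf s, ∀ i ∈ A, w i = true := by
  rw [realize_eq_sup, bool_sup_iff]
  exact exists_congr fun A => and_congr_right fun _ => bool_inf_iff A w

theorem dlatValid_iff_bool {α : Type} (s t : LatTerm α) :
    DLatValid (s, t) ↔ ∀ w : α → Bool, s.realize w = t.realize w := by
  classical
  constructor
  · intro h w; exact h Bool w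
  · intro h M _ v
    set e : M → WithTop (WithBot M) := fun x => ((x : WithBot M) : WithTop (WithBot M)) with he
    have hinj : Function.Injective e := fun a b hab => by
      simpa [he] using hab
    have hcoe : ∀ x y : M, e x ⊓ e y = e (x ⊓ y) := by
      intro x y; simp only [he, ← WithBot.coe_inf, ← WithTop.coe_inf]
    have hcoe' : ∀ x y : M, e x ⊔ e y = e (x ⊔ y) := by
      intro x y; simp only [he, ← WithBot.coe_sup, ← WithTop.coe_sup]
    have hreal : ∀ u : LatTerm α, u.realize (e ∘ v) = e (u.realize v) := by
      intro u; induction u with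
      | var a => rfl
      | meet a b iha ihb =>
        show a.realize (e ∘ v) ⊓ b.realize (e ∘ v) = e (a.realize v ⊓ b.realize v)
        rw [iha, ihb, hcoe]
      | join a b iha ihb =>
        show a.realize (e ∘ v) ⊔ b.realize (e ∘ v) = e (a.realize v ⊔ b.realize v)
        rw [iha, ihb, hcoe']
    show s.realize v = t.realize v
    apply hinj
    rw [← hreal s, ← hreal t, realize_eq_sup, realize_eq_sup]
    have key : ∀ (X Y : Finset (Finset α)), (∀ A ∈ X, ∃ B ∈ Y, B ⊆ A) →
        X.sup (fun A => A.inf (e ∘ v)) ≤ Y.sup (fun A => A.inf (e ∘ v)) := by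
      intro X Y hXY
      apply Finset.sup_le
      intro A hA
      obtain ⟨B, hB, hBA⟩ := hXY A hA
      exact le_trans (Finset.inf_mono hBA) (Finset.le_sup hB)
    have sub : ∀ (p q : LatTerm α), (∀ w : α → Bool, p.realize w = q.realize w) →
        ∀ A ∈ dnf p, ∃ B ∈ dnf q, B ⊆ A := by
      intro p q hpq A hA
      set w : α → Bool := fun i => decide (i ∈ A) with hwdef
      have hp : p.realize w = true :=
        (realize_bool_iff w p).2 ⟨A, hA, fun i hi => by simp [hwdef, hi]⟩
      have hq := (realize_bool_iff w q).1 (by rw [← hpq]; exact hp)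
      obtain ⟨B, hB, hBw⟩ := hq
      exact ⟨B, hB, fun i hi => by simpa [hwdef] using hBw i hi⟩
    exact le_antisymm (key _ _ (sub s t h)) (key _ _ (sub t s fun w => (h w).symm))

end AuxDL

namespace AuxDL

open LatTerm

theorem realize_foldl_meet {β M : Type} [Lattice M] (v : β → M) :
    ∀ (l : List (LatTerm β)) (a : LatTerm β),
      (List.foldl LatTerm.meet a l).realize v
        = List.foldl (fun x y => x ⊓ y.realize v) (a.realize v) l
  | [], _ => rfl
  | b :: l, a => by
    rw [List.foldl_cons, List.foldl_cons, realize_foldl_meet v l (a.meet b)]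
    rfl

theorem realize_foldl_join {β M : Type} [Lattice M] (v : β → M) :
    ∀ (l : List (LatTerm β)) (a : LatTerm β),
      (List.foldl LatTerm.join a l).realize v
        = List.foldl (fun x y => x ⊔ y.realize v) (a.realize v) l
  | [], _ => rfl
  | b :: l, a => by
    rw [List.foldl_cons, List.foldl_cons, realize_foldl_join v l (a.join b)]
    rfl

theorem bool_inf_eq (a b : Bool) : a ⊓ b = (a && b) := by
  cases a <;> cases b <;> decide

theorem bool_sup_eq (a b : Bool) : a ⊔ b = (a || b) := by
  cases a <;> cases b <;> decide

theorem foldl_inf_bool {γ : Type} (g : γ → Bool) :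
    ∀ (l : List γ) (c : Bool),
      (List.foldl (fun x y => x ⊓ g y) c l = true ↔ c = true ∧ ∀ y ∈ l, g y = true)
  | [], c => by simp
  | b :: l, c => by
    rw [List.foldl_cons, foldl_inf_bool g l (c ⊓ g b), bool_inf_eq]
    simp [Bool.and_eq_true, and_assoc]

theorem foldl_sup_bool {γ : Type} (g : γ → Bool) :
    ∀ (l : List γ) (c : Bool),
      (List.foldl (fun x y => x ⊔ g y) c l = true ↔ c = true ∨ ∃ y ∈ l, g y = true)
  | [], c => by simp
  | b :: l, c => by
    rw [List.foldl_cons, foldl_sup_bool g l (c ⊔ g b), bool_sup_eq]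
    simp [Bool.or_eq_true, or_assoc]

theorem realize_meetListNE_bool {β : Type} (w : β → Bool) :
    ∀ (l : List (LatTerm β)) (h : l ≠ []),
      ((meetListNE l h).realize w = true ↔ ∀ x ∈ l, x.realize w = true)
  | [], h => absurd rfl h
  | a :: l, _ => by
    show (List.foldl LatTerm.meet a l).realize w = true ↔ _
    rw [realize_foldl_meet, foldl_inf_bool]
    simp

theorem realize_joinListNE_bool {β : Type} (w : β → Bool) :
    ∀ (l : List (LatTerm β)) (h : l ≠ []),
      ((joinListNE l h).realize w = true ↔ ∃ x ∈ l, x.realize w = true)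
  | [], h => absurd rfl h
  | a :: l, _ => by
    show (List.foldl LatTerm.join a l).realize w = true ↔ _
    rw [realize_foldl_join, foldl_sup_bool]
    simp

theorem realize_finsetMeet_bool {γ β : Type} (w : β → Bool) (I : Finset γ)
    (hI : I.Nonempty) (f : γ → LatTerm β) :
    ((finsetMeet I hI f).realize w = true ↔ ∀ i ∈ I, (f i).realize w = true) := by
  rw [finsetMeet, realize_meetListNE_bool]
  simp

theorem realize_finsetJoin_bool {γ β : Type} (w : β → Bool) (I : Finset γ)
    (hI : I.Nonempty) (f : γ → LatTerm β) :
    ((finsetJoin I hI f).realize w = true ↔ ∃ i ∈ I, (f i).realize w = true) := by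
  rw [finsetJoin, realize_joinListNE_bool]
  simp

theorem subst_foldl_meet {α β : Type} (σ : α → LatTerm β) :
    ∀ (l : List (LatTerm α)) (a : LatTerm α),
      (List.foldl LatTerm.meet a l).subst σ
        = List.foldl LatTerm.meet (a.subst σ) (l.map (LatTerm.subst σ))
  | [], _ => rfl
  | b :: l, a => by
    rw [List.foldl_cons, List.map_cons, List.foldl_cons, subst_foldl_meet σ l (a.meet b)]
    rfl

theorem subst_foldl_join {α β : Type} (σ : α → LatTerm β) :
    ∀ (l : List (LatTerm α)) (a : LatTerm α),
      (List.foldl LatTerm.join a l).subst σ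
        = List.foldl LatTerm.join (a.subst σ) (l.map (LatTerm.subst σ))
  | [], _ => rfl
  | b :: l, a => by
    rw [List.foldl_cons, List.map_cons, List.foldl_cons, subst_foldl_join σ l (a.join b)]
    rfl

theorem subst_meetListNE {α β : Type} (σ : α → LatTerm β) :
    ∀ (l : List (LatTerm α)) (h : l ≠ []) (h' : l.map (LatTerm.subst σ) ≠ []),
      (meetListNE l h).subst σ = meetListNE (l.map (LatTerm.subst σ)) h'
  | [], h, _ => absurd rfl h
  | _ :: _, _, _ => subst_foldl_meet σ _ _

theorem subst_joinListNE {α β : Type} (σ : α → LatTerm β) :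
    ∀ (l : List (LatTerm α)) (h : l ≠ []) (h' : l.map (LatTerm.subst σ) ≠ []),
      (joinListNE l h).subst σ = joinListNE (l.map (LatTerm.subst σ)) h'
  | [], h, _ => absurd rfl h
  | _ :: _, _, _ => subst_foldl_join σ _ _

theorem meetListNE_congr {α : Type} {l l' : List (LatTerm α)} (h : l = l')
    (hl : l ≠ []) (hl' : l' ≠ []) : meetListNE l hl = meetListNE l' hl' := by
  subst h; rfl

theorem joinListNE_congr {α : Type} {l l' : List (LatTerm α)} (h : l = l')
    (hl : l ≠ []) (hl' : l' ≠ []) : joinListNE l hl = joinListNE l' hl' := by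
  subst h; rfl

theorem subst_finsetMeet {γ α β : Type} (σ : α → LatTerm β) (I : Finset γ)
    (hI : I.Nonempty) (f : γ → LatTerm α) :
    (finsetMeet I hI f).subst σ = finsetMeet I hI fun i => (f i).subst σ := by
  rw [finsetMeet, finsetMeet, subst_meetListNE σ _ _
    (by simp only [ne_eq, List.map_eq_nil_iff, Finset.toList_eq_nil]; exact hI.ne_empty)]
  exact meetListNE_congr (by rw [List.map_map]; rfl) _ _

theorem subst_finsetJoin {γ α β : Type} (σ : α → LatTerm β) (I : Finset γ)
    (hI : I.Nonempty) (f : γ → LatTerm α) :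
    (finsetJoin I hI f).subst σ = finsetJoin I hI fun i => (f i).subst σ := by
  rw [finsetJoin, finsetJoin, subst_joinListNE σ _ _
    (by simp only [ne_eq, List.map_eq_nil_iff, Finset.toList_eq_nil]; exact hI.ne_empty)]
  exact joinListNE_congr (by rw [List.map_map]; rfl) _ _

theorem realize_subst {α β M : Type} [Lattice M] (σ : α → LatTerm β) (v : β → M) :
    ∀ u : LatTerm α, (u.subst σ).realize v = u.realize fun i => (σ i).realize v
  | .var _ => rfl
  | .meet s t => by
    show (s.subst σ).realize v ⊓ (t.subst σ).realize v = _
    rw [realize_subst σ v s, realize_subst σ v t]; rfl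
  | .join s t => by
    show (s.subst σ).realize v ⊔ (t.subst σ).realize v = _
    rw [realize_subst σ v s, realize_subst σ v t]; rfl

theorem realize_const {α M : Type} [Lattice M] (c : M) :
    ∀ x : LatTerm α, x.realize (fun _ => c) = c
  | .var _ => rfl
  | .meet s t => by
    show (LatTerm.realize _ s) ⊓ (LatTerm.realize _ t) = c
    rw [realize_const c s, realize_const c t, inf_idem]
  | .join s t => by
    show (LatTerm.realize _ s) ⊔ (LatTerm.realize _ t) = c
    rw [realize_const c s, realize_const c t, sup_idem]

end AuxDL

theorem stmt12 (m : ℕ) {β : Type} (t : Fin (m + 2) → LatTerm β) :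
    DLatDependent t ↔
      ∃ (I : Finset (Fin (m + 2))) (hI : I.Nonempty) (_ : I ≠ Finset.univ)
        (hc : Iᶜ.Nonempty),
        DLatValid (leEq (finsetMeet I hI t) (finsetJoin Iᶜ hc t)) := by
  classical
  constructor
  · rintro ⟨⟨s, u⟩, hvalid, hnot⟩
    rw [AuxDL.dlatValid_iff_bool] at hnot
    push_neg at hnot
    obtain ⟨w, hw⟩ := hnot
    set I : Finset (Fin (m + 2)) := Finset.univ.filter (fun i => w i = true) with hIdef
    have hwI : ∀ i, w i = true ↔ i ∈ I := by
      intro i; simp [hIdef]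
    have hI : I.Nonempty := by
      rw [Finset.nonempty_iff_ne_empty]
      intro hemp
      have hwfalse : ∀ i, w i = false := by
        intro i
        cases hwi : w i
        · rfl
        · exact absurd ((hwI i).1 hwi) (by simp [hemp])
      rw [funext hwfalse, AuxDL.realize_const, AuxDL.realize_const] at hw
      exact hw rfl
    have hne : I ≠ Finset.univ := by
      intro huniv
      have hwtrue : ∀ i, w i = true := fun i => (hwI i).2 (huniv ▸ Finset.mem_univ i)
      rw [funext hwtrue, AuxDL.realize_const, AuxDL.realize_const] at hw
      exact hw rfl
    have hc : Iᶜ.Nonempty := by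
      rw [Finset.nonempty_iff_ne_empty]
      intro h
      exact hne (by rwa [Finset.compl_eq_empty_iff] at h)
    refine ⟨I, hI, hne, hc, ?_⟩
    rw [show leEq (finsetMeet I hI t) (finsetJoin Iᶜ hc t)
        = ((finsetMeet I hI t).meet (finsetJoin Iᶜ hc t), finsetMeet I hI t) from rfl,
      AuxDL.dlatValid_iff_bool]
    intro ω
    show (finsetMeet I hI t).realize ω ⊓ (finsetJoin Iᶜ hc t).realize ω
      = (finsetMeet I hI t).realize ω
    rcases ha : (finsetMeet I hI t).realize ω with _ | _
    · rw [AuxDL.bool_inf_eq, Bool.false_and]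
    · rw [AuxDL.bool_inf_eq]
      suffices h : (finsetJoin Iᶜ hc t).realize ω = true by rw [h, Bool.and_true]
      by_contra hb
      have hbf : ∀ j ∈ Iᶜ, (t j).realize ω = false := by
        intro j hj
        cases hjt : (t j).realize ω
        · rfl
        · exact absurd ((AuxDL.realize_finsetJoin_bool ω Iᶜ hc t).2 ⟨j, hj, hjt⟩) hb
      have hmt : ∀ i ∈ I, (t i).realize ω = true :=
        (AuxDL.realize_finsetMeet_bool ω I hI t).1 ha
      have huw : (fun i => (t i).realize ω) = w := by
        funext i
        by_cases hi : i ∈ I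
        · rw [hmt i hi, (hwI i).2 hi]
        · rw [hbf i (Finset.mem_compl.2 hi)]
          cases hwi : w i
          · rfl
          · exact absurd ((hwI i).1 hwi) hi
      have hval := hvalid Bool ω
      rw [AuxDL.realize_subst, AuxDL.realize_subst, huw] at hval
      exact hw hval
  · rintro ⟨I, hI, hne, hc, hval⟩
    refine ⟨leEq (finsetMeet I hI LatTerm.var) (finsetJoin Iᶜ hc LatTerm.var), ?_, ?_⟩
    · have h1 : (finsetMeet I hI LatTerm.var).subst t = finsetMeet I hI t := by
        rw [AuxDL.subst_finsetMeet]; rfl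
      have h2 : (finsetJoin Iᶜ hc LatTerm.var).subst t = finsetJoin Iᶜ hc t := by
        rw [AuxDL.subst_finsetJoin]; rfl
      show DLatValid (((finsetMeet I hI LatTerm.var).subst t).meet
        ((finsetJoin Iᶜ hc LatTerm.var).subst t), (finsetMeet I hI LatTerm.var).subst t)
      rw [h1, h2]
      exact hval
    · intro habs
      set w : Fin (m + 2) → Bool := fun i => decide (i ∈ I) with hwdef
      have h2 : (finsetMeet I hI LatTerm.var).realize w
          ⊓ (finsetJoin Iᶜ hc LatTerm.var).realize w
          = (finsetMeet I hI LatTerm.var).realize w := habs Bool w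
      have ha : (finsetMeet I hI LatTerm.var).realize w = true :=
        (AuxDL.realize_finsetMeet_bool w I hI _).2 fun i hi => by
          show w i = true
          simp [hwdef, hi]
      have hb : (finsetJoin Iᶜ hc LatTerm.var).realize w = false := by
        cases hbb : (finsetJoin Iᶜ hc LatTerm.var).realize w
        · rfl
        · obtain ⟨j, hj, hjw⟩ := (AuxDL.realize_finsetJoin_bool w Iᶜ hc _).1 hbb
          have : w j = true := hjw
          rw [hwdef] at this
          simp only [decide_eq_true_eq] at this
          exact absurd this (Finset.mem_compl.1 hj)
      rw [ha, hb, AuxDL.bool_inf_eq] at h2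
      exact absurd h2 (by simp)
end

section
/- Let t_1 := x_1 ⊓ (x_2 ⊔ x_3) and t_2 := x_2 ⊔ (x_1 ⊓ x_3), lattice terms over the three variables x_1, x_2, x_3. Then t_1 and t_2 are Lat-independent: for every lattice equation ε over Fin 2, if ⊨_Lat ε(t_1, t_2) then ⊨_Lat ε. -/
/-- `t₁ := x₁ ⊓ (x₂ ⊔ x₃)`. -/
def t₁ : LatTerm (Fin 3) := .meet (.var 0) (.join (.var 1) (.var 2))

/-- `t₂ := x₂ ⊔ (x₁ ⊓ x₃)`. -/
def t₂ : LatTerm (Fin 3) := .join (.var 1) (.meet (.var 0) (.var 2))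

namespace Stmt14Aux

lemma subst_realize {α β M : Type} [Lattice M] (v : β → M) (σ : α → LatTerm β) :
    ∀ s : LatTerm α, (s.subst σ).realize v = s.realize (fun a => (σ a).realize v)
  | .var a => rfl
  | .meet s t => by
      simp [LatTerm.subst, LatTerm.realize, subst_realize v σ s, subst_realize v σ t]
  | .join s t => by
      simp [LatTerm.subst, LatTerm.realize, subst_realize v σ s, subst_realize v σ t]

def vB : Fin 2 → Bool × Bool := ![(true, false), (false, true)]

def eval {M : Type} [Lattice M] (v : Fin 2 → M) : Bool × Bool → M
  | (false, false) => v 0 ⊓ v 1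
  | (true, false) => v 0
  | (false, true) => v 1
  | (true, true) => v 0 ⊔ v 1

lemma eval_inf {M : Type} [Lattice M] (v : Fin 2 → M) (x y : Bool × Bool) :
    eval v (x ⊓ y) = eval v x ⊓ eval v y := by
  rcases x with ⟨xa, xb⟩; rcases y with ⟨ya, yb⟩
  cases xa <;> cases xb <;> cases ya <;> cases yb <;>
    simp [eval, Prod.inf_def] <;>
    first
      | exact le_trans inf_le_left le_sup_left
      | (apply le_antisymm <;> simp [le_inf_iff, inf_le_left, inf_le_right, le_sup_left, le_sup_right])

lemma eval_sup {M : Type} [Lattice M] (v : Fin 2 → M) (x y : Bool × Bool) :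
    eval v (x ⊔ y) = eval v x ⊔ eval v y := by
  rcases x with ⟨xa, xb⟩; rcases y with ⟨ya, yb⟩
  cases xa <;> cases xb <;> cases ya <;> cases yb <;>
    simp [eval, Prod.sup_def] <;>
    first
      | exact le_trans inf_le_left le_sup_left
      | (apply le_antisymm <;> simp [sup_le_iff, inf_le_left, inf_le_right, le_sup_left, le_sup_right])

lemma realize_eq_eval {M : Type} [Lattice M] (v : Fin 2 → M) :
    ∀ s : LatTerm (Fin 2), s.realize v = eval v (s.realize vB)
  | .var a => by fin_cases a <;> rfl
  | .meet s t => by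
      simp [LatTerm.realize, realize_eq_eval v s, realize_eq_eval v t, eval_inf]
  | .join s t => by
      simp [LatTerm.realize, realize_eq_eval v s, realize_eq_eval v t, eval_sup]

inductive M3 : Type | O | A | B | C | T
  deriving DecidableEq

instance : Fintype M3 :=
  ⟨⟨↑[M3.O, M3.A, M3.B, M3.C, M3.T], by decide⟩, fun x => by cases x <;> decide⟩

def M3.sup' : M3 → M3 → M3
  | .O, x => x
  | x, .O => x
  | .A, .A => .A
  | .B, .B => .B
  | .C, .C => .C
  | _, _ => .T

def M3.inf' : M3 → M3 → M3
  | .T, x => x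
  | x, .T => x
  | .A, .A => .A
  | .B, .B => .B
  | .C, .C => .C
  | _, _ => .O

instance : Max M3 := ⟨M3.sup'⟩
instance : Min M3 := ⟨M3.inf'⟩

instance : Lattice M3 :=
  Lattice.mk' (by decide) (by decide) (by decide) (by decide) (by decide) (by decide)

end Stmt14Aux

open Stmt14Aux

theorem stmt14 :
    ∀ e : LatEq (Fin 2),
      LatValid (e.1.subst ![t₁, t₂], e.2.subst ![t₁, t₂]) → LatValid e := by
  intro e H
  have hM3 : (e.1.subst ![t₁, t₂]).realize (![M3.A, M3.B, M3.C]) =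
      (e.2.subst ![t₁, t₂]).realize (![M3.A, M3.B, M3.C]) := H M3 ![M3.A, M3.B, M3.C]
  rw [subst_realize, subst_realize] at hM3
  have hv : (fun a : Fin 2 => ((![t₁, t₂] : Fin 2 → LatTerm (Fin 3)) a).realize
      (![M3.A, M3.B, M3.C])) = ![M3.A, M3.B] := by
    funext a; fin_cases a <;> decide
  rw [hv] at hM3
  have key : e.1.realize vB = e.2.realize vB := by
    have inj : ∀ x y : Bool × Bool,
        eval (![M3.A, M3.B]) x = eval (![M3.A, M3.B]) y → x = y := by decide
    apply inj
    rw [← realize_eq_eval, ← realize_eq_eval]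
    exact hM3
  intro M _ v
  rw [realize_eq_eval v e.1, realize_eq_eval v e.2, key]
end

section
/- (Sardinas–Patterson.) Let A be a type and X a finite set of words over A. Then X is not a code if and only if there exists n ≥ 1 such that X ∩ U_n is nonempty. -/
/-- The product `a * l₀ * l₁ * ⋯` of a nonempty list of words given by its head `a`
and tail `l`. -/
def wordProd {A : Type} (a : FreeSemigroup A) (l : List (FreeSemigroup A)) :
    FreeSemigroup A :=
  l.foldl (· * ·) a

/-- `X` is a code: any two factorizations of a word into elements of `X` coincide. -/
def IsCode {A : Type} (X : Set (FreeSemigroup A)) : Prop :=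
  ∀ (a₁ a₂ : FreeSemigroup A) (l₁ l₂ : List (FreeSemigroup A)),
    a₁ ∈ X → a₂ ∈ X → (∀ u ∈ l₁, u ∈ X) → (∀ u ∈ l₂, u ∈ X) →
      wordProd a₁ l₁ = wordProd a₂ l₂ → a₁ :: l₁ = a₂ :: l₂

/-- `Y⁻¹Z := { t | ∃ s ∈ Y, s * t ∈ Z }`. -/
def quotSet {A : Type} (Y Z : Set (FreeSemigroup A)) : Set (FreeSemigroup A) :=
  { t | ∃ s ∈ Y, s * t ∈ Z }

/-- The Sardinas–Patterson sets: `U 0 = X` and `U (n+1) = X⁻¹(U n) ∪ (U n)⁻¹X`. -/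
def spU {A : Type} (X : Set (FreeSemigroup A)) : ℕ → Set (FreeSemigroup A)
  | 0 => X
  | n + 1 => quotSet X (spU X n) ∪ quotSet (spU X n) X

namespace SPaux

variable {A : Type}

/-- The list of letters of a word. -/
def toL (x : FreeSemigroup A) : List A := x.head :: x.tail

lemma toL_mul (x y : FreeSemigroup A) : toL (x * y) = toL x ++ toL y := by
  cases x; cases y; rfl

lemma toL_inj : Function.Injective (toL (A := A)) := by
  intro x y h
  cases x; cases y
  simp only [toL, List.cons.injEq] at h
  exact FreeSemigroup.ext h.1 h.2

lemma len_pos (x : FreeSemigroup A) : 0 < (toL x).length := by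
  cases x; simp [toL]

lemma ne_mul (a b : FreeSemigroup A) : a ≠ a * b := by
  intro h
  have := congrArg (fun z => (toL z).length) h
  simp only [toL_mul, List.length_append] at this
  have := len_pos b; omega

lemma mul_left_cancel' {a b c : FreeSemigroup A} (h : a * b = a * c) : b = c := by
  apply toL_inj
  have := congrArg toL h
  rw [toL_mul, toL_mul] at this
  exact List.append_cancel_left this

lemma split (u v w z : FreeSemigroup A) (h : u * v = w * z) :
    (u = w ∧ v = z) ∨ (∃ e, w = u * e ∧ v = e * z) ∨ (∃ e, u = w * e ∧ e * v = z) := by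
  have h' : toL u ++ toL v = toL w ++ toL z := by rw [← toL_mul, ← toL_mul, h]
  rcases List.append_eq_append_iff.mp h' with ⟨l, hw, hv⟩ | ⟨l, hu, hz⟩
  · rcases l with _ | ⟨c, t⟩
    · left
      simp only [List.append_nil, List.nil_append] at hw hv
      exact ⟨toL_inj hw.symm, toL_inj hv⟩
    · right; left
      refine ⟨⟨c, t⟩, toL_inj ?_, toL_inj ?_⟩
      · rw [toL_mul]; exact hw
      · rw [toL_mul]; exact hv
  · rcases l with _ | ⟨c, t⟩
    · left
      simp only [List.append_nil, List.nil_append] at hu hz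
      exact ⟨toL_inj hu, (toL_inj hz).symm⟩
    · right; right
      refine ⟨⟨c, t⟩, toL_inj ?_, toL_inj ?_⟩
      · rw [toL_mul]; exact hu
      · rw [toL_mul]; exact hz.symm

lemma wordProd_cons : ∀ (l : List (FreeSemigroup A)) (a x : FreeSemigroup A),
    wordProd a (x :: l) = a * wordProd x l := by
  intro l
  induction l with
  | nil => intro a x; rfl
  | cons b l ih =>
      intro a x
      show wordProd (a * x) (b :: l) = a * wordProd x (b :: l)
      calc wordProd (a * x) (b :: l) = (a * x) * wordProd b l := ih _ _
        _ = a * (x * wordProd b l) := mul_assoc _ _ _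
        _ = a * wordProd x (b :: l) := by rw [ih]

lemma wordProd_append (a w : FreeSemigroup A) (l : List (FreeSemigroup A)) :
    wordProd a (l ++ [w]) = wordProd a l * w := by
  simp [wordProd, List.foldl_append]

lemma mem_quot_left {X : Set (FreeSemigroup A)} {s t : FreeSemigroup A} {n : ℕ}
    (hs : s ∈ X) (h : s * t ∈ spU X n) : t ∈ spU X (n + 1) :=
  Or.inl ⟨s, hs, h⟩

lemma mem_quot_right {X : Set (FreeSemigroup A)} {s t : FreeSemigroup A} {n : ℕ}
    (hs : s ∈ spU X n) (h : s * t ∈ X) : t ∈ spU X (n + 1) :=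
  Or.inr ⟨s, hs, h⟩

/-- Completeness: from two factorizations with a dangling suffix `d ∈ U n`,
some `U m` (m ≥ 1) meets `X`. -/
lemma keyC (X : Set (FreeSemigroup A)) :
    ∀ N n (x d : FreeSemigroup A) (xs ys : List (FreeSemigroup A)),
      x ∈ X → d ∈ spU X n → (1 ≤ n ∨ x ≠ d) →
      (∀ u ∈ xs, u ∈ X) → (∀ u ∈ ys, u ∈ X) →
      wordProd x xs = wordProd d ys → (toL (wordProd x xs)).length ≤ N →
      ∃ m, 1 ≤ m ∧ (X ∩ spU X m).Nonempty := by
  intro N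
  induction N with
  | zero =>
      intro n x d xs ys _ _ _ _ _ _ hlen
      exact absurd hlen (by have := len_pos (wordProd x xs); omega)
  | succ N ih =>
      intro n x d xs ys hx hd hnd hxs hys heq hlen
      match xs, ys with
      | [], [] =>
          have hxd : x = d := heq
          rcases hnd with hn | hne
          · exact ⟨n, hn, x, hx, hxd ▸ hd⟩
          · exact absurd hxd hne
      | [], b :: ys' =>
          rw [wordProd_cons] at heq
          set e := wordProd b ys' with he_def
          have he : e ∈ spU X (n + 1) := mem_quot_right hd (heq ▸ hx)
          refine ih (n + 1) b e ys' [] (hys b (by simp)) he (Or.inl (by omega))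
            (fun u hu => hys u (by simp [hu])) (by simp) rfl ?_
          rw [← he_def]
          have hlen' : (toL x).length ≤ N + 1 := hlen
          have h1 := congrArg (fun z => (toL z).length) heq
          simp only [toL_mul, List.length_append] at h1
          have := len_pos d
          omega
      | a :: xs', [] =>
          rw [wordProd_cons] at heq
          set e := wordProd a xs' with he_def
          have he : e ∈ spU X (n + 1) := mem_quot_left hx (heq ▸ hd)
          refine ih (n + 1) a e xs' [] (hxs a (by simp)) he (Or.inl (by omega))
            (fun u hu => hxs u (by simp [hu])) (by simp) rfl ?_
          rw [wordProd_cons] at hlen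
          simp only [toL_mul, List.length_append] at hlen
          have := len_pos x
          omega
      | a :: xs', b :: ys' =>
          rw [wordProd_cons, wordProd_cons] at heq
          rw [wordProd_cons] at hlen
          simp only [toL_mul, List.length_append] at hlen
          rcases split _ _ _ _ heq with ⟨hxd, _⟩ | ⟨e, hde, hv⟩ | ⟨e, hxe, hv⟩
          · rcases hnd with hn | hne
            · exact ⟨n, hn, x, hx, hxd ▸ hd⟩
            · exact absurd hxd hne
          · have he : e ∈ spU X (n + 1) := mem_quot_left hx (hde ▸ hd)
            refine ih (n + 1) a e xs' (b :: ys') (hxs a (by simp)) he (Or.inl (by omega))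
              (fun u hu => hxs u (by simp [hu])) hys ?_ ?_
            · rw [wordProd_cons]; exact hv
            · have := len_pos x; omega
          · have he : e ∈ spU X (n + 1) := mem_quot_right hd (hxe ▸ hx)
            refine ih (n + 1) b e ys' (a :: xs') (hys b (by simp)) he (Or.inl (by omega))
              (fun u hu => hys u (by simp [hu])) hxs ?_ ?_
            · rw [wordProd_cons]; exact hv.symm
            · have h1 := congrArg (fun z => (toL z).length) hv
              simp only [toL_mul, List.length_append] at h1
              have h2 := congrArg (fun z => (toL z).length) hxe
              simp only [toL_mul, List.length_append] at h2
              have := len_pos d; have := len_pos e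
              omega

/-- Stripping the common prefix of two distinct factorizations. -/
lemma strip (X : Set (FreeSemigroup A)) :
    ∀ (l₁ : List (FreeSemigroup A)) (a₁ a₂ : FreeSemigroup A) (l₂ : List (FreeSemigroup A)),
      a₁ ∈ X → a₂ ∈ X → (∀ u ∈ l₁, u ∈ X) → (∀ u ∈ l₂, u ∈ X) →
      wordProd a₁ l₁ = wordProd a₂ l₂ → a₁ :: l₁ ≠ a₂ :: l₂ →
      ∃ b₁ m₁ b₂ m₂, b₁ ∈ X ∧ b₂ ∈ X ∧ (∀ u ∈ m₁, u ∈ X) ∧ (∀ u ∈ m₂, u ∈ X) ∧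
        b₁ ≠ b₂ ∧ wordProd b₁ m₁ = wordProd b₂ m₂ := by
  intro l₁
  induction l₁ with
  | nil =>
      intro a₁ a₂ l₂ h₁ h₂ hl₁ hl₂ heq hne
      by_cases h : a₁ = a₂
      · subst h
        rcases l₂ with _ | ⟨b, l₂'⟩
        · exact absurd rfl hne
        · rw [wordProd_cons] at heq
          exact absurd heq (ne_mul _ _)
      · exact ⟨a₁, [], a₂, l₂, h₁, h₂, by simp, hl₂, h, heq⟩
  | cons c l₁' ihl =>
      intro a₁ a₂ l₂ h₁ h₂ hl₁ hl₂ heq hne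
      by_cases h : a₁ = a₂
      · subst h
        rcases l₂ with _ | ⟨b, l₂'⟩
        · rw [wordProd_cons] at heq
          exact absurd heq.symm (ne_mul _ _)
        · rw [wordProd_cons, wordProd_cons] at heq
          have heq' := mul_left_cancel' heq
          have hne' : c :: l₁' ≠ b :: l₂' := by
            intro hh; exact hne (by rw [hh])
          exact ihl c b l₂' (hl₁ c (by simp)) (hl₂ b (by simp))
            (fun u hu => hl₁ u (by simp [hu])) (fun u hu => hl₂ u (by simp [hu])) heq' hne'
      · exact ⟨a₁, c :: l₁', a₂, l₂, h₁, h₂, hl₁, hl₂, h, heq⟩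

/-- Soundness: if `w ∈ U (n+1)` then there are two factorizations differing in the
first codeword, whose words differ by the suffix `w`. -/
lemma lemB (X : Set (FreeSemigroup A)) :
    ∀ n, ∀ w ∈ spU X (n + 1),
      ∃ x xs y ys, x ∈ X ∧ (∀ u ∈ xs, u ∈ X) ∧ y ∈ X ∧ (∀ u ∈ ys, u ∈ X) ∧ x ≠ y ∧
        wordProd x xs * w = wordProd y ys := by
  intro n
  induction n with
  | zero =>
      intro w hw
      have : ∃ s ∈ X, s * w ∈ X := by
        rcases hw with ⟨s, hs, hsw⟩ | ⟨s, hs, hsw⟩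
        · exact ⟨s, hs, hsw⟩
        · exact ⟨s, hs, hsw⟩
      obtain ⟨s, hs, hsw⟩ := this
      exact ⟨s, [], s * w, [], hs, by simp, hsw, by simp, ne_mul s w, rfl⟩
  | succ n ih =>
      intro w hw
      rcases hw with ⟨s, hs, hsw⟩ | ⟨s, hs, hsw⟩
      · obtain ⟨x, xs, y, ys, hx, hxs, hy, hys, hne, heq⟩ := ih (s * w) hsw
        refine ⟨x, xs ++ [s], y, ys, hx, ?_, hy, hys, hne, ?_⟩
        · intro u hu
          rcases List.mem_append.mp hu with h | h
          · exact hxs u h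
          · simp at h; subst h; exact hs
        · rw [wordProd_append, mul_assoc]; exact heq
      · obtain ⟨x, xs, y, ys, hx, hxs, hy, hys, hne, heq⟩ := ih s hs
        refine ⟨y, ys, x, xs ++ [s * w], hy, hys, hx, ?_, hne.symm, ?_⟩
        · intro u hu
          rcases List.mem_append.mp hu with h | h
          · exact hxs u h
          · simp at h; subst h; exact hsw
        · rw [wordProd_append, ← heq, mul_assoc]

end SPaux

theorem stmt15 {A : Type} (X : Set (FreeSemigroup A)) (hX : X.Finite) :
    ¬ IsCode X ↔ ∃ n : ℕ, 1 ≤ n ∧ (X ∩ spU X n).Nonempty := by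
  constructor
  · intro h
    simp only [IsCode, not_forall] at h
    obtain ⟨a₁, a₂, l₁, l₂, h₁, h₂, hl₁, hl₂, heq, hne⟩ := h
    obtain ⟨b₁, m₁, b₂, m₂, hb₁, hb₂, hm₁, hm₂, hbne, hbeq⟩ :=
      SPaux.strip X l₁ a₁ a₂ l₂ h₁ h₂ hl₁ hl₂ heq hne
    exact SPaux.keyC X (SPaux.toL (wordProd b₁ m₁)).length 0 b₁ b₂ m₁ m₂ hb₁ hb₂
      (Or.inr hbne) hm₁ hm₂ hbeq le_rfl
  · rintro ⟨n, hn, w, hwX, hwU⟩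
    obtain ⟨m, rfl⟩ : ∃ m, n = m + 1 := ⟨n - 1, by omega⟩
    obtain ⟨x, xs, y, ys, hx, hxs, hy, hys, hne, heq⟩ := SPaux.lemB X m w hwU
    intro hcode
    have := hcode x y (xs ++ [w]) ys hx hy
      (fun u hu => by
        rcases List.mem_append.mp hu with h | h
        · exact hxs u h
        · simp at h; subst h; exact hwX)
      hys
      (by rw [SPaux.wordProd_append]; exact heq)
    simp at this
    exact hne this.1
end

section
/- Let A be a type and X a finite set of words over A. Then for every n ≥ 1, every element of U_n is a proper suffix of some element of X, i.e., U_n ⊆ { t | there exists a word s with s * t ∈ X }; consequently the set { U_n : n ∈ ℕ } of subsets of words is finite. -/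
/-- The underlying list of a free semigroup element. -/
def toL {A : Type} (x : FreeSemigroup A) : List A := x.head :: x.tail

lemma toL_mul {A : Type} (x y : FreeSemigroup A) : toL (x * y) = toL x ++ toL y := by
  simp [toL]

lemma toL_inj {A : Type} : Function.Injective (toL (A := A)) := by
  intro x y h
  simpa [toL, FreeSemigroup.ext_iff] using h

lemma suffixSet_finite {A : Type} (X : Set (FreeSemigroup A)) (hX : X.Finite) :
    { t : FreeSemigroup A | ∃ s : FreeSemigroup A, s * t ∈ X }.Finite := by
  have : { t : FreeSemigroup A | ∃ s : FreeSemigroup A, s * t ∈ X } ⊆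
      ⋃ x ∈ X, { t | toL t <:+ toL x } := by
    rintro t ⟨s, hs⟩
    refine Set.mem_biUnion hs ?_
    exact ⟨toL s, (toL_mul s t).symm⟩
  refine Set.Finite.subset (Set.Finite.biUnion hX fun x _ => ?_) this
  have h1 : { l : List A | l <:+ toL x }.Finite := by
    have : { l : List A | l <:+ toL x } ⊆ { l | l ∈ (toL x).tails } := by
      intro l hl; exact (List.mem_tails _ _).mpr hl
    exact Set.Finite.subset ((toL x).tails.finite_toSet) this
  have : { t : FreeSemigroup A | toL t <:+ toL x } = toL ⁻¹' { l | l <:+ toL x } := rfl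
  rw [this]
  exact Set.Finite.preimage (Function.Injective.injOn toL_inj) h1

theorem stmt16 {A : Type} (X : Set (FreeSemigroup A)) (hX : X.Finite) :
    (∀ n : ℕ, 1 ≤ n → spU X n ⊆ { t | ∃ s : FreeSemigroup A, s * t ∈ X }) ∧
      (Set.range (spU X)).Finite := by
  have key : ∀ n : ℕ, 1 ≤ n → spU X n ⊆ { t | ∃ s : FreeSemigroup A, s * t ∈ X } := by
    intro n
    induction n with
    | zero => intro h; omega
    | succ m ih =>
      intro _ t ht
      rcases ht with ⟨s, hsU, hst⟩ | ⟨s, hsU, hst⟩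
      · match m, hst with
        | 0, hst => exact ⟨s, hst⟩
        | m + 1, hst =>
          obtain ⟨u, hu⟩ := ih (by omega) hst
          exact ⟨u * s, by rwa [mul_assoc]⟩
      · exact ⟨s, hst⟩
  refine ⟨key, ?_⟩
  have hS := suffixSet_finite X hX
  have : Set.range (spU X) ⊆
      insert X { U | U ⊆ { t : FreeSemigroup A | ∃ s : FreeSemigroup A, s * t ∈ X } } := by
    rintro _ ⟨n, rfl⟩
    match n with
    | 0 => exact Or.inl rfl
    | n + 1 => exact Or.inr (key (n + 1) (by omega))
  exact Set.Finite.subset ((hS.finite_subsets).insert X) this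
end

section
/- Every finitely generated subgroup of a free group is isomorphic to a free group on a finite set: if X is a type and H is a finitely generated subgroup of FreeGroup X, then there exist a finite type S and a group isomorphism H ≃* FreeGroup S. (Hence finitely generated subgroups of finitely generated free groups are finitely presented, i.e., finitely generated free groups are coherent.) -/
theorem stmt18 (X : Type) (H : Subgroup (FreeGroup X)) (hH : H.FG) :
    ∃ (S : Type) (_ : Finite S), Nonempty (H ≃* FreeGroup S) := by
  have hfg : Group.FG H := (Group.fg_iff_subgroup_fg H).mpr hH
  let S := IsFreeGroup.Generators H
  let e : H ≃* FreeGroup S := IsFreeGroup.toFreeGroup H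
  have h1 : Group.FG (FreeGroup S) :=
    Group.fg_of_surjective (f := e.toMonoidHom) e.surjective
  have h2 : Group.FG (Abelianization (FreeGroup S)) :=
    Group.fg_of_surjective (f := Abelianization.of) QuotientGroup.mk_surjective
  have h3 : AddGroup.FG (FreeAbelianGroup S) :=
    @AddGroup.fg_of_group_fg (Abelianization (FreeGroup S)) _ h2
  have h4 : Module.Finite ℤ (FreeAbelianGroup S) := Module.Finite.iff_addGroup_fg.mpr h3
  have h5 : Finite S := Module.Finite.finite_basis (FreeAbelianGroup.basis S)
  exact ⟨S, h5, ⟨e⟩⟩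
end

section
/- Let E be a set of lattice equations (over arbitrary variable types) and let V be the class of all lattices in which every equation of E holds under every valuation. Assume V contains a lattice with at least two elements. Then for any lattice terms t_1, t_2 over a variable type β, the terms t_1, t_2 are V-dependent if and only if ⊨_V t_1 ≤ t_2 or ⊨_V t_2 ≤ t_1. -/
/-- The lattice `M` belongs to the class `V` of all lattices satisfying every
equation of `E` (a set of lattice equations over arbitrary variable types)
under every valuation. -/
def InLatVariety (E : Set (Σ α : Type, LatEq α)) (M : Type) [Lattice M] : Prop :=
  ∀ q ∈ E, ∀ v : q.1 → M, q.2.1.realize v = q.2.2.realize v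

/-- `⊨_V e`: the two terms of `e` have equal realizations in every member of `V`
under every valuation, where `V` is the class of lattices determined by `E`. -/
def VLatValid (E : Set (Σ α : Type, LatEq α)) {β : Type} (e : LatEq β) : Prop :=
  ∀ (M : Type) [Lattice M], InLatVariety E M →
    ∀ v : β → M, e.1.realize v = e.2.realize v

/-- `t₁, t₂` are `V`-dependent: some equation `e` over `Fin 2` satisfies
`⊨_V e(t₁, t₂)` but not `⊨_V e`. -/
def VLatDependent (E : Set (Σ α : Type, LatEq α)) {β : Type}
    (t₁ t₂ : LatTerm β) : Prop :=
  ∃ e : LatEq (Fin 2),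
    VLatValid E (e.1.subst ![t₁, t₂], e.2.subst ![t₁, t₂]) ∧ ¬ VLatValid E e

section Aux

private def interp {M : Type} [Lattice M] (a b : M) : Fin 4 → M := ![a, b, a ⊓ b, a ⊔ b]

private def meetNF : Fin 4 → Fin 4 → Fin 4 := ![![0,2,2,0],![2,1,2,1],![2,2,2,2],![0,1,2,3]]
private def joinNF : Fin 4 → Fin 4 → Fin 4 := ![![0,3,0,3],![3,1,1,3],![0,1,2,3],![3,3,3,3]]

private def nf : LatTerm (Fin 2) → Fin 4
  | .var a => ![0, 1] a
  | .meet s t => meetNF (nf s) (nf t)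
  | .join s t => joinNF (nf s) (nf t)

private lemma interp_meet {M : Type} [Lattice M] (a b : M) (i j : Fin 4) :
    interp a b i ⊓ interp a b j = interp a b (meetNF i j) := by
  fin_cases i <;> fin_cases j <;>
    simp [interp, meetNF, inf_comm, inf_left_comm, inf_sup_self, sup_inf_self, inf_assoc,
      Matrix.vecHead, Matrix.vecTail]

private lemma interp_join {M : Type} [Lattice M] (a b : M) (i j : Fin 4) :
    interp a b i ⊔ interp a b j = interp a b (joinNF i j) := by
  fin_cases i <;> fin_cases j <;>
    simp [interp, joinNF, sup_comm, sup_left_comm, inf_sup_self, sup_inf_self, sup_assoc,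
      Matrix.vecHead, Matrix.vecTail]

private lemma realize_subst {α β M : Type} [Lattice M] (σ : α → LatTerm β) (v : β → M)
    (t : LatTerm α) :
    (t.subst σ).realize v = t.realize (fun a => (σ a).realize v) := by
  induction t <;> simp [LatTerm.subst, LatTerm.realize, *]

private lemma realize_eq_interp {M : Type} [Lattice M] (v : Fin 2 → M) (t : LatTerm (Fin 2)) :
    t.realize v = interp (v 0) (v 1) (nf t) := by
  induction t with
  | var a =>
      fin_cases a <;> simp [LatTerm.realize, nf, interp]
  | meet s t hs ht => rw [LatTerm.realize, hs, ht, interp_meet]; rfl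
  | join s t hs ht => rw [LatTerm.realize, hs, ht, interp_join]; rfl

end Aux

theorem stmt19 (E : Set (Σ α : Type, LatEq α))
    (hV : ∃ (M : Type) (inst : Lattice M),
      @InLatVariety E M inst ∧ ∃ a b : M, a ≠ b)
    {β : Type} (t₁ t₂ : LatTerm β) :
    VLatDependent E t₁ t₂ ↔ VLatValid E (leEq t₁ t₂) ∨ VLatValid E (leEq t₂ t₁) := by
  obtain ⟨M₀, inst₀, hM₀, a₀, b₀, hab⟩ := hV
  have hxy : ∃ x y : M₀, ¬ x ≤ y := by
    by_contra h
    push_neg at h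
    exact hab (le_antisymm (h a₀ b₀) (h b₀ a₀))
  obtain ⟨x, y, hnle⟩ := hxy
  constructor
  · rintro ⟨⟨s, t⟩, hsub, hnv⟩
    have H : ∀ (M : Type) [Lattice M], InLatVariety E M → ∀ v : β → M,
        interp (t₁.realize v) (t₂.realize v) (nf s)
          = interp (t₁.realize v) (t₂.realize v) (nf t) := by
      intro M _ hM v
      have h := hsub M hM v
      simp only [realize_subst] at h
      rw [realize_eq_interp, realize_eq_interp] at h
      simpa using h
    by_cases hst : nf s = nf t
    · refine absurd ?_ hnv
      intro M _ hM v
      rw [realize_eq_interp, realize_eq_interp, hst]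
    clear hnv hsub hnle hab hM₀
    generalize nf s = i at H hst
    generalize nf t = j at H hst
    fin_cases i <;> fin_cases j
    -- i = 0
    · exact absurd rfl hst
    · -- A = B
      left; intro M _ hM v
      have h : t₁.realize v = t₂.realize v := by
        simpa [interp, Matrix.vecHead, Matrix.vecTail] using H M hM v
      show t₁.realize v ⊓ t₂.realize v = t₁.realize v
      simp [h]
    · -- A = A ⊓ B
      left; intro M _ hM v
      have h : t₁.realize v ≤ t₂.realize v := by
        simpa [interp, Matrix.vecHead, Matrix.vecTail] using H M hM v
      exact inf_eq_left.mpr h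
    · -- A = A ⊔ B
      right; intro M _ hM v
      have h : t₁.realize v = t₁.realize v ⊔ t₂.realize v := by
        simpa [interp, Matrix.vecHead, Matrix.vecTail] using H M hM v
      exact inf_eq_left.mpr (le_sup_right.trans h.ge)
    -- i = 1
    · -- B = A
      left; intro M _ hM v
      have h : t₂.realize v = t₁.realize v := by
        simpa [interp, Matrix.vecHead, Matrix.vecTail] using H M hM v
      show t₁.realize v ⊓ t₂.realize v = t₁.realize v
      simp [h]
    · exact absurd rfl hst
    · -- B = A ⊓ B
      right; intro M _ hM v
      have h : t₂.realize v = t₁.realize v ⊓ t₂.realize v := by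
        simpa [interp, Matrix.vecHead, Matrix.vecTail] using H M hM v
      exact inf_eq_left.mpr (h.le.trans inf_le_left)
    · -- B = A ⊔ B
      left; intro M _ hM v
      have h : t₂.realize v = t₁.realize v ⊔ t₂.realize v := by
        simpa [interp, Matrix.vecHead, Matrix.vecTail] using H M hM v
      exact inf_eq_left.mpr (le_sup_left.trans h.ge)
    -- i = 2
    · -- A ⊓ B = A
      left; intro M _ hM v
      have h : t₁.realize v ⊓ t₂.realize v = t₁.realize v := by
        simpa [interp, Matrix.vecHead, Matrix.vecTail] using H M hM v
      exact h
    · -- A ⊓ B = B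
      right; intro M _ hM v
      have h : t₁.realize v ⊓ t₂.realize v = t₂.realize v := by
        simpa [interp, Matrix.vecHead, Matrix.vecTail] using H M hM v
      exact inf_eq_left.mpr (h.ge.trans inf_le_left)
    · exact absurd rfl hst
    · -- A ⊓ B = A ⊔ B
      left; intro M _ hM v
      have h : t₁.realize v ⊓ t₂.realize v = t₁.realize v ⊔ t₂.realize v := by
        simpa [interp, Matrix.vecHead, Matrix.vecTail] using H M hM v
      exact inf_eq_left.mpr (le_sup_left.trans (h.ge.trans inf_le_right))
    -- i = 3
    · -- A ⊔ B = A
      right; intro M _ hM v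
      have h : t₁.realize v ⊔ t₂.realize v = t₁.realize v := by
        simpa [interp, Matrix.vecHead, Matrix.vecTail] using H M hM v
      exact inf_eq_left.mpr (le_sup_right.trans h.le)
    · -- A ⊔ B = B
      left; intro M _ hM v
      have h : t₁.realize v ⊔ t₂.realize v = t₂.realize v := by
        simpa [interp, Matrix.vecHead, Matrix.vecTail] using H M hM v
      exact inf_eq_left.mpr (le_sup_left.trans h.le)
    · -- A ⊔ B = A ⊓ B
      left; intro M _ hM v
      have h : t₁.realize v ⊔ t₂.realize v = t₁.realize v ⊓ t₂.realize v := by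
        simpa [interp, Matrix.vecHead, Matrix.vecTail] using H M hM v
      exact inf_eq_left.mpr (le_sup_left.trans (h.le.trans inf_le_right))
    · exact absurd rfl hst
  · rintro (h | h)
    · refine ⟨leEq (.var 0) (.var 1), fun M _ hM v => ?_, fun hval => ?_⟩
      · simpa [leEq, LatTerm.subst, LatTerm.realize] using h M hM v
      · have := hval M₀ hM₀ ![x, y]
        simp [leEq, LatTerm.realize] at this
        exact hnle this
    · refine ⟨leEq (.var 1) (.var 0), fun M _ hM v => ?_, fun hval => ?_⟩
      · simpa [leEq, LatTerm.subst, LatTerm.realize] using h M hM v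
      · have := hval M₀ hM₀ ![y, x]
        simp [leEq, LatTerm.realize] at this
        exact hnle this
end
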